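/- arXiv:math/0209133 — 2 statements merged into one kernel-verified Lean document; each statement's English description precedes it below -/
import Mathlib

section
/- Every factor of a good word is good: if w = u·v·z for words u, v, z (u, z possibly empty) and w is a good word, then v is a good word. -/
open scoped BigOperators

noncomputable section

/-- The field `ℚ(q)` of rational functions over `ℚ`. -/
abbrev K : Type := RatFunc ℚ

/-- The indeterminate `q`. -/
abbrev qq : K := RatFunc.X

/-- Words on the alphabet `{w_1, …, w_r}` (the free monoid `M`). -/
abbrev Word (r : ℕ) := List (Fin r)

/-- The space `F` with basis the words, as finitely supported families of coefficients. -/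
abbrev FA (r : ℕ) := Word r →₀ K

variable {r : ℕ}

/-- `(|w|, |x|)` : the symmetric bilinear form evaluated on the degrees of two words,
where `p i j = (α_i, α_j)` is the form on simple roots. -/
def pairW (p : Fin r → Fin r → ℤ) (w x : Word r) : ℤ :=
  (w.map fun i => (x.map fun j => p i j).sum).sum

/-- Auxiliary q-shuffle on *reversed* words:
`shAux p w x` is the q-shuffle of `w.reverse` and `x.reverse`; it implements the recursion
`(w·a) * (x·b) = (w * (x·b))·a + q^{-(|w·a|,|b|)} ((w·a) * x)·b`, `w[] * x = x * w[] = x`. -/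
def shAux (p : Fin r → Fin r → ℤ) : Word r → Word r → FA r
  | [], x => Finsupp.single x.reverse 1
  | w, [] => Finsupp.single w.reverse 1
  | a :: w, b :: x =>
      Finsupp.mapDomain (fun u => u ++ [a]) (shAux p w (b :: x))
      + (qq ^ (-(pairW p (a :: w) [b]))) •
          Finsupp.mapDomain (fun u => u ++ [b]) (shAux p (a :: w) x)
  termination_by w x => w.length + x.length
  decreasing_by all_goals (first | (simp only [List.length_cons]; omega) | omega)

/-- The q-shuffle product `*` on `F`, extended bilinearly from words. -/
def shuffle (p : Fin r → Fin r → ℤ) (f g : FA r) : FA r :=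
  f.sum fun w c => g.sum fun x d => (c * d) • shAux p w.reverse x.reverse

/-- Membership in `𝒰`, the `ℚ(q)`-subalgebra of `(F, *)` generated by the letters `w_i`. -/
inductive InU (p : Fin r → Fin r → ℤ) : FA r → Prop
  | letter (i : Fin r) : InU p (Finsupp.single [i] 1)
  | one : InU p (Finsupp.single ([] : Word r) 1)
  | add : ∀ {f g : FA r}, InU p f → InU p g → InU p (f + g)
  | smul : ∀ (c : K) {f : FA r}, InU p f → InU p (c • f)
  | mul : ∀ {f g : FA r}, InU p f → InU p g → InU p (shuffle p f g)

/-- The degree of a word in `Q⁺`, recorded as the multiplicity of each simple root. -/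
def deg (w : Word r) : Fin r → ℕ := fun i => w.count i

/-- `f` is homogeneous of degree `ν`. -/
def Homog (f : FA r) (ν : Fin r → ℕ) : Prop := ∀ w ∈ f.support, deg w = ν

/-- Lexicographic order on words (a proper left factor is smaller than the word). -/
def wlt (w x : Word r) : Prop := List.Lex (· < ·) w x

def wle (w x : Word r) : Prop := wlt w x ∨ w = x

/-- `g` is the lexicographically largest word occurring (with nonzero coefficient) in `f`. -/
def IsMaxWord (f : FA r) (g : Word r) : Prop :=
  f g ≠ 0 ∧ ∀ w ∈ f.support, wle w g

/-- Good words: words of the form `max(u)` for a nonzero homogeneous `u ∈ 𝒰`. -/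
def IsGood (p : Fin r → Fin r → ℤ) (g : Word r) : Prop :=
  ∃ u : FA r, InU p u ∧ (∃ ν, Homog u ν) ∧ IsMaxWord u g

/-- The data of the Cartan matrix `[a_{ij}]` of a finite-dimensional complex simple
Lie algebra of rank `r`: an integral matrix with `2` on the diagonal and nonpositive
off-diagonal entries, symmetrizable by `d_i ∈ {1,2,3}`, whose symmetrization
`(α_i, α_j) = d_i a_{ij}` is positive definite, and which is indecomposable. -/
structure CartanData (r : ℕ) where
  a : Fin r → Fin r → ℤ
  d : Fin r → ℤ
  diag : ∀ i, a i i = 2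
  offdiag : ∀ i j, i ≠ j → a i j ≤ 0
  dval : ∀ i, d i = 1 ∨ d i = 2 ∨ d i = 3
  dsymm : ∀ i j, d i * a i j = d j * a j i
  posdef : ∀ v : Fin r → ℚ, v ≠ 0 → 0 < ∑ i, ∑ j, v i * v j * ((d i * a i j : ℤ) : ℚ)
  indec : ∀ s : Finset (Fin r), s.Nonempty → s ≠ Finset.univ →
    ∃ i ∈ s, ∃ j, j ∉ s ∧ a i j ≠ 0

/-- The symmetric bilinear form `(α_i, α_j) = d_i a_{ij}` on simple roots. -/
def CartanData.p (C : CartanData r) : Fin r → Fin r → ℤ := fun i j => C.d i * C.a i j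

namespace QShufDev

variable {r : ℕ} (p : Fin r → Fin r → ℤ)

open Finsupp

/-- single-word shuffle: `sh p w x = w * x`. -/
def sh (w x : Word r) : FA r := shAux p w.reverse x.reverse

lemma shAux_nil_left (x : Word r) : shAux p [] x = Finsupp.single x.reverse 1 := by
  rw [shAux]

lemma shAux_nil_right (w : Word r) : shAux p w [] = Finsupp.single w.reverse 1 := by
  cases w with
  | nil => rw [shAux]
  | cons a w => rw [shAux]; exact fun h => by cases h

lemma sh_nil_left (x : Word r) : sh p [] x = Finsupp.single x 1 := by
  simp [sh, shAux_nil_left]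

lemma sh_nil_right (w : Word r) : sh p w [] = Finsupp.single w 1 := by
  simp [sh, shAux_nil_right]

lemma pairW_one (l : Word r) (b : Fin r) :
    pairW p l [b] = (l.map fun i => p i b).sum := by
  simp [pairW]

lemma pairW_fst_rev (l : Word r) (b : Fin r) :
    pairW p l.reverse [b] = pairW p l [b] := by
  simp only [pairW_one, List.map_reverse, List.sum_reverse]

lemma pairW_fst_append (l₁ l₂ : Word r) (b : Fin r) :
    pairW p (l₁ ++ l₂) [b] = pairW p l₁ [b] + pairW p l₂ [b] := by
  simp [pairW_one]

lemma pairW_snd_one (a : Fin r) (l : Word r) :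
    pairW p [a] l = (l.map fun j => p a j).sum := by
  simp [pairW]

lemma pairW_snd_append (a : Fin r) (l₁ l₂ : Word r) :
    pairW p [a] (l₁ ++ l₂) = pairW p [a] l₁ + pairW p [a] l₂ := by
  simp [pairW_snd_one]

lemma pairW_single_single (a b : Fin r) : pairW p [a] [b] = p a b := by
  simp [pairW]

lemma sh_snoc_snoc (w x : Word r) (a b : Fin r) :
    sh p (w ++ [a]) (x ++ [b]) =
      Finsupp.mapDomain (fun u => u ++ [a]) (sh p w (x ++ [b]))
      + (qq ^ (-(pairW p (w ++ [a]) [b]))) •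
          Finsupp.mapDomain (fun u => u ++ [b]) (sh p (w ++ [a]) x) := by
  have h1 : (w ++ [a]).reverse = a :: w.reverse := by simp
  have h2 : (x ++ [b]).reverse = b :: x.reverse := by simp
  rw [sh, h1, h2, shAux]
  rw [show pairW p (a :: w.reverse) [b] = pairW p (w ++ [a]) [b] by
    rw [← h1, pairW_fst_rev]]
  simp only [sh, h1, h2]

end QShufDev
namespace QShufDev
variable {r : ℕ} (p : Fin r → Fin r → ℤ)
open Finsupp

lemma hq : (qq : K) ≠ 0 := RatFunc.X_ne_zero

lemma mapd_comm (a c : Fin r) (v : FA r) :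
    Finsupp.mapDomain (fun u : Word r => a :: u) (Finsupp.mapDomain (fun u => u ++ [c]) v)
      = Finsupp.mapDomain (fun u => u ++ [c]) (Finsupp.mapDomain (fun u => a :: u) v) := by
  rw [← Finsupp.mapDomain_comp, ← Finsupp.mapDomain_comp]
  rfl

lemma sh_cons_cons_aux (n : ℕ) : ∀ (w x : Word r), w.length + x.length ≤ n → ∀ a b : Fin r,
    sh p (a::w) (b::x) =
      (qq ^ (-(pairW p [a] (b::x)))) • Finsupp.mapDomain (fun u => a :: u) (sh p w (b::x))
      + Finsupp.mapDomain (fun u => b :: u) (sh p (a::w) x) := by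
  induction n with
  | zero =>
    intro w x hn a b
    have hw : w = [] := by cases w <;> simp_all
    have hx : x = [] := by cases x <;> simp_all
    subst hw; subst hx
    rw [show ([a] : Word r) = [] ++ [a] from rfl, show ([b] : Word r) = [] ++ [b] from rfl,
      sh_snoc_snoc]
    simp only [List.nil_append, sh_nil_left, sh_nil_right, Finsupp.mapDomain_single,
      pairW_single_single]
    exact add_comm _ _
  | succ n ih =>
    intro w x hn a b
    rcases List.eq_nil_or_concat x with hx | ⟨x', d, hx⟩
    · subst hx
      rcases List.eq_nil_or_concat w with hw | ⟨w', c, hw⟩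
      · subst hw
        rw [show ([a] : Word r) = [] ++ [a] from rfl, show ([b] : Word r) = [] ++ [b] from rfl,
          sh_snoc_snoc]
        simp only [List.nil_append, sh_nil_left, sh_nil_right, Finsupp.mapDomain_single,
          pairW_single_single]
        exact add_comm _ _
      · rw [List.concat_eq_append] at hw
        subst hw
        have e1 : sh p (a :: (w' ++ [c])) [b]
            = Finsupp.mapDomain (fun u => u ++ [c]) (sh p (a::w') [b])
              + (qq ^ (-(pairW p ((a::w') ++ [c]) [b]))) •
                  Finsupp.mapDomain (fun u => u ++ [b]) (Finsupp.single (a :: (w' ++ [c])) (1:K)) := by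
          rw [show a :: (w' ++ [c]) = (a::w') ++ [c] from rfl,
            show ([b] : Word r) = [] ++ [b] from rfl, sh_snoc_snoc, List.nil_append, sh_nil_right]
        have e2 : sh p (a::w') [b]
            = (qq ^ (-(pairW p [a] [b]))) • Finsupp.mapDomain (fun u => a :: u) (sh p w' [b])
              + Finsupp.mapDomain (fun u => b :: u) (Finsupp.single (a::w') (1:K)) := by
          have := ih w' [] (by simp at hn ⊢; omega) a b
          rwa [sh_nil_right] at this
        have e3 : sh p (w' ++ [c]) [b]
            = Finsupp.mapDomain (fun u => u ++ [c]) (sh p w' [b])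
              + (qq ^ (-(pairW p (w' ++ [c]) [b]))) •
                  Finsupp.mapDomain (fun u => u ++ [b]) (Finsupp.single (w' ++ [c]) (1:K)) := by
          rw [show ([b] : Word r) = [] ++ [b] from rfl, sh_snoc_snoc, List.nil_append, sh_nil_right]
        have hsplit : qq ^ (-(pairW p ((a::w') ++ [c]) [b]))
            = qq ^ (-(pairW p [a] [b])) * qq ^ (-(pairW p (w' ++ [c]) [b])) := by
          rw [show (a::w') ++ [c] = [a] ++ (w' ++ [c]) from rfl, pairW_fst_append, neg_add,
            zpow_add₀ hq]
        rw [e1, e2, e3, hsplit, sh_nil_right]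
        simp only [Finsupp.mapDomain_add, Finsupp.mapDomain_smul, Finsupp.mapDomain_single,
          mapd_comm, smul_add, smul_smul, List.cons_append, List.append_assoc,
          List.singleton_append, List.nil_append]
        ring_nf
        abel
    · rw [List.concat_eq_append] at hx
      subst hx
      rcases List.eq_nil_or_concat w with hw | ⟨w', c, hw⟩
      · subst hw
        have e1 : sh p [a] (b :: (x' ++ [d]))
            = Finsupp.mapDomain (fun u => u ++ [a]) (Finsupp.single (b :: (x' ++ [d])) (1:K))
              + (qq ^ (-(pairW p [a] [d]))) •
                  Finsupp.mapDomain (fun u => u ++ [d]) (sh p [a] (b::x')) := by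
          rw [show b :: (x' ++ [d]) = (b::x') ++ [d] from rfl,
            show ([a] : Word r) = [] ++ [a] from rfl, sh_snoc_snoc, List.nil_append, sh_nil_left]
        have e2 : sh p [a] (b::x')
            = (qq ^ (-(pairW p [a] (b::x')))) •
                Finsupp.mapDomain (fun u => a :: u) (Finsupp.single (b::x') (1:K))
              + Finsupp.mapDomain (fun u => b :: u) (sh p [a] x') := by
          have := ih [] x' (by simp at hn ⊢; omega) a b
          rwa [sh_nil_left] at this
        have e3 : sh p [a] (x' ++ [d])
            = Finsupp.mapDomain (fun u => u ++ [a]) (Finsupp.single (x' ++ [d]) (1:K))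
              + (qq ^ (-(pairW p [a] [d]))) •
                  Finsupp.mapDomain (fun u => u ++ [d]) (sh p [a] x') := by
          rw [show ([a] : Word r) = [] ++ [a] from rfl, sh_snoc_snoc, List.nil_append, sh_nil_left]
        have hsplit : qq ^ (-(pairW p [a] (b :: (x' ++ [d]))))
            = qq ^ (-(pairW p [a] (b::x'))) * qq ^ (-(pairW p [a] [d])) := by
          rw [show b :: (x' ++ [d]) = (b::x') ++ [d] from rfl, pairW_snd_append, neg_add,
            zpow_add₀ hq]
        rw [e1, e2, e3, hsplit, sh_nil_left]
        simp only [Finsupp.mapDomain_add, Finsupp.mapDomain_smul, Finsupp.mapDomain_single,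
          mapd_comm, smul_add, smul_smul, List.cons_append, List.append_assoc,
          List.singleton_append, List.nil_append]
        ring_nf
        abel
      · rw [List.concat_eq_append] at hw
        subst hw
        have e1 : sh p (a :: (w' ++ [c])) (b :: (x' ++ [d]))
            = Finsupp.mapDomain (fun u => u ++ [c]) (sh p (a::w') (b :: (x' ++ [d])))
              + (qq ^ (-(pairW p ((a::w') ++ [c]) [d]))) •
                  Finsupp.mapDomain (fun u => u ++ [d]) (sh p (a :: (w' ++ [c])) (b::x')) := by
          rw [show a :: (w' ++ [c]) = (a::w') ++ [c] from rfl,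
            show b :: (x' ++ [d]) = (b::x') ++ [d] from rfl, sh_snoc_snoc]
        have e2 := ih w' (x' ++ [d]) (by simp at hn ⊢; omega) a b
        have e3 := ih (w' ++ [c]) x' (by simp at hn ⊢; omega) a b
        have e4 : sh p (w' ++ [c]) (b :: (x' ++ [d]))
            = Finsupp.mapDomain (fun u => u ++ [c]) (sh p w' (b :: (x' ++ [d])))
              + (qq ^ (-(pairW p (w' ++ [c]) [d]))) •
                  Finsupp.mapDomain (fun u => u ++ [d]) (sh p (w' ++ [c]) (b::x')) := by
          rw [show b :: (x' ++ [d]) = (b::x') ++ [d] from rfl, sh_snoc_snoc]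
        have e5 : sh p (a :: (w' ++ [c])) (x' ++ [d])
            = Finsupp.mapDomain (fun u => u ++ [c]) (sh p (a::w') (x' ++ [d]))
              + (qq ^ (-(pairW p ((a::w') ++ [c]) [d]))) •
                  Finsupp.mapDomain (fun u => u ++ [d]) (sh p (a :: (w' ++ [c])) x') := by
          rw [show a :: (w' ++ [c]) = (a::w') ++ [c] from rfl, sh_snoc_snoc]
        have h1 : qq ^ (-(pairW p [a] (b :: (x' ++ [d]))))
            = qq ^ (-(pairW p [a] (b::x'))) * qq ^ (-(pairW p [a] [d])) := by
          rw [show b :: (x' ++ [d]) = (b::x') ++ [d] from rfl, pairW_snd_append, neg_add,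
            zpow_add₀ hq]
        have h2 : qq ^ (-(pairW p ((a::w') ++ [c]) [d]))
            = qq ^ (-(pairW p [a] [d])) * qq ^ (-(pairW p (w' ++ [c]) [d])) := by
          rw [show (a::w') ++ [c] = [a] ++ (w' ++ [c]) from rfl, pairW_fst_append, neg_add,
            zpow_add₀ hq]
        rw [e1, e2, e3, e4, e5, h1, h2]
        simp only [Finsupp.mapDomain_add, Finsupp.mapDomain_smul, mapd_comm, smul_add, smul_smul]
        ring_nf
        abel

lemma sh_cons_cons (w x : Word r) (a b : Fin r) :
    sh p (a::w) (b::x) =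
      (qq ^ (-(pairW p [a] (b::x)))) • Finsupp.mapDomain (fun u => a :: u) (sh p w (b::x))
      + Finsupp.mapDomain (fun u => b :: u) (sh p (a::w) x) :=
  sh_cons_cons_aux p (w.length + x.length) w x le_rfl a b

end QShufDev
namespace QShufDev
variable {r : ℕ} (p : Fin r → Fin r → ℤ)
open Finsupp

/-- right deletion operator: `(Rop i f) y = f (y ++ [i])`. -/
def Rop (i : Fin r) (f : FA r) : FA r :=
  Finsupp.comapDomain (fun y : Word r => y ++ [i]) f
    ((List.append_left_injective [i]).injOn)

/-- left deletion operator: `(Lop i f) y = f (i :: y)`. -/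
def Lop (i : Fin r) (f : FA r) : FA r :=
  Finsupp.comapDomain (fun y : Word r => i :: y) f (List.cons_injective.injOn)

@[simp] lemma Rop_apply (i : Fin r) (f : FA r) (y : Word r) : Rop i f y = f (y ++ [i]) := rfl
@[simp] lemma Lop_apply (i : Fin r) (f : FA r) (y : Word r) : Lop i f y = f (i :: y) := rfl

lemma Rop_add (i : Fin r) (f g : FA r) : Rop i (f + g) = Rop i f + Rop i g := by
  ext y; simp
lemma Lop_add (i : Fin r) (f g : FA r) : Lop i (f + g) = Lop i f + Lop i g := by
  ext y; simp
lemma Rop_smul (i : Fin r) (c : K) (f : FA r) : Rop i (c • f) = c • Rop i f := by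
  ext y; simp
lemma Lop_smul (i : Fin r) (c : K) (f : FA r) : Lop i (c • f) = c • Lop i f := by
  ext y; simp
@[simp] lemma Rop_zero (i : Fin r) : Rop i (0 : FA r) = 0 := by ext y; simp
@[simp] lemma Lop_zero (i : Fin r) : Lop i (0 : FA r) = 0 := by ext y; simp

lemma Rop_single_nil (i : Fin r) (c : K) : Rop i (Finsupp.single ([] : Word r) c) = 0 := by
  ext y
  rw [Rop_apply, Finsupp.single_apply, if_neg (fun h : ([] : Word r) = y ++ [i] => by simp at h)]
  rfl

lemma Rop_single_snoc (i a : Fin r) (w : Word r) (c : K) :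
    Rop i (Finsupp.single (w ++ [a]) c) = if a = i then Finsupp.single w c else 0 := by
  rcases eq_or_ne a i with h | h
  · subst h
    rw [if_pos rfl]
    ext y
    rw [Rop_apply, Finsupp.single_apply, Finsupp.single_apply]
    by_cases hy : w = y
    · subst hy; simp
    · rw [if_neg (fun hh => hy (List.append_left_injective [a] hh)), if_neg hy]
  · rw [if_neg h]
    ext y
    rw [Rop_apply, Finsupp.single_apply,
      if_neg (fun hh : w ++ [a] = y ++ [i] => h (by simpa using List.append_inj_right' hh rfl))]
    rfl

lemma Lop_single_nil (i : Fin r) (c : K) : Lop i (Finsupp.single ([] : Word r) c) = 0 := by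
  ext y
  rw [Lop_apply, Finsupp.single_apply, if_neg (fun h : ([] : Word r) = i :: y => by simp at h)]
  rfl

lemma Lop_single_cons (i a : Fin r) (w : Word r) (c : K) :
    Lop i (Finsupp.single (a :: w) c) = if a = i then Finsupp.single w c else 0 := by
  rcases eq_or_ne a i with h | h
  · subst h
    rw [if_pos rfl]
    ext y
    rw [Lop_apply, Finsupp.single_apply, Finsupp.single_apply]
    by_cases hy : w = y
    · subst hy; simp
    · rw [if_neg (fun hh => hy (by injection hh)), if_neg hy]
  · rw [if_neg h]
    ext y
    rw [Lop_apply, Finsupp.single_apply,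
      if_neg (fun hh : a :: w = i :: y => h (by injection hh))]
    rfl

lemma Rop_mapDomain_snoc (i c : Fin r) (g : FA r) :
    Rop i (Finsupp.mapDomain (fun u : Word r => u ++ [c]) g)
      = if c = i then g else 0 := by
  ext y
  rw [Rop_apply]
  by_cases h : c = i
  · subst h
    rw [Finsupp.mapDomain_apply (List.append_left_injective [c]) g y, if_pos rfl]
  · rw [if_neg h]
    rw [Finsupp.mapDomain_notin_range]
    · simp
    · rintro ⟨u, hu⟩
      exact h (by simpa using List.append_inj_right' hu rfl)

lemma Lop_mapDomain_cons (i c : Fin r) (g : FA r) :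
    Lop i (Finsupp.mapDomain (fun u : Word r => c :: u) g)
      = if c = i then g else 0 := by
  ext y
  rw [Lop_apply]
  by_cases h : c = i
  · subst h
    rw [Finsupp.mapDomain_apply List.cons_injective g y, if_pos rfl]
  · rw [if_neg h]
    rw [Finsupp.mapDomain_notin_range]
    · simp
    · rintro ⟨u, hu⟩
      cases hu; exact h rfl

end QShufDev
namespace QShufDev
variable {r : ℕ} (p : Fin r → Fin r → ℤ)
open Finsupp

lemma shuffle_single_single (w x : Word r) (c d : K) :
    shuffle p (Finsupp.single w c) (Finsupp.single x d) = (c * d) • sh p w x := by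
  unfold shuffle
  rw [Finsupp.sum_single_index, Finsupp.sum_single_index]
  · rfl
  · simp
  · rw [Finsupp.sum_single_index] <;> simp

@[simp] lemma shuffle_zero_left (g : FA r) : shuffle p 0 g = 0 := by
  unfold shuffle; simp

@[simp] lemma shuffle_zero_right (f : FA r) : shuffle p f 0 = 0 := by
  unfold shuffle; simp

lemma shuffle_add_left (f₁ f₂ g : FA r) :
    shuffle p (f₁ + f₂) g = shuffle p f₁ g + shuffle p f₂ g := by
  unfold shuffle
  apply Finsupp.sum_add_index
  · intro w _; simp
  · intro w _ c₁ c₂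
    rw [← Finsupp.sum_add]
    congr 1; funext x d
    rw [add_mul, add_smul]

lemma shuffle_add_right (f g₁ g₂ : FA r) :
    shuffle p f (g₁ + g₂) = shuffle p f g₁ + shuffle p f g₂ := by
  unfold shuffle
  rw [← Finsupp.sum_add]
  congr 1; funext w c
  apply Finsupp.sum_add_index
  · intro x _; simp
  · intro x _ d₁ d₂
    rw [mul_add, add_smul]

lemma shuffle_smul_left (c : K) (f g : FA r) :
    shuffle p (c • f) g = c • shuffle p f g := by
  unfold shuffle
  rw [Finsupp.sum_smul_index' (by intro w; simp), Finsupp.smul_sum]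
  congr 1; funext w a
  rw [Finsupp.smul_sum]
  congr 1; funext x d
  rw [smul_eq_mul, mul_assoc, mul_smul c]

lemma shuffle_smul_right (c : K) (f g : FA r) :
    shuffle p f (c • g) = c • shuffle p f g := by
  unfold shuffle
  rw [Finsupp.smul_sum]
  congr 1; funext w a
  rw [Finsupp.sum_smul_index' (by intro x; simp), Finsupp.smul_sum]
  congr 1; funext x d
  rw [smul_eq_mul, mul_left_comm a c d, mul_smul c]

lemma shuffle_sum_left {ι : Type*} (s : Finset ι) (F : ι → FA r) (g : FA r) :
    shuffle p (∑ i ∈ s, F i) g = ∑ i ∈ s, shuffle p (F i) g :=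
  map_sum (AddMonoidHom.mk' (fun f => shuffle p f g) (fun f₁ f₂ => shuffle_add_left p f₁ f₂ g)) F s

lemma shuffle_sum_right {ι : Type*} (s : Finset ι) (f : FA r) (G : ι → FA r) :
    shuffle p f (∑ i ∈ s, G i) = ∑ i ∈ s, shuffle p f (G i) :=
  map_sum (AddMonoidHom.mk' (fun g => shuffle p f g) (fun g₁ g₂ => shuffle_add_right p f g₁ g₂)) G s

lemma Rop_sum {ι : Type*} (i : Fin r) (s : Finset ι) (F : ι → FA r) :
    Rop i (∑ j ∈ s, F j) = ∑ j ∈ s, Rop i (F j) :=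
  map_sum (AddMonoidHom.mk' (fun f => Rop i f) (fun f₁ f₂ => Rop_add i f₁ f₂)) F s

lemma Lop_sum {ι : Type*} (i : Fin r) (s : Finset ι) (F : ι → FA r) :
    Lop i (∑ j ∈ s, F j) = ∑ j ∈ s, Lop i (F j) :=
  map_sum (AddMonoidHom.mk' (fun f => Lop i f) (fun f₁ f₂ => Lop_add i f₁ f₂)) F s

/-- `(ν, α_i)` -/
def PWl (ν : Fin r → ℕ) (i : Fin r) : ℤ := ∑ j, (ν j : ℤ) * p j i
/-- `(α_i, ν)` -/
def PWr (ν : Fin r → ℕ) (i : Fin r) : ℤ := ∑ j, (ν j : ℤ) * p i j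

lemma deg_nil : deg ([] : Word r) = fun _ => 0 := by funext j; simp [deg]

lemma deg_cons (a : Fin r) (w : Word r) :
    deg (a :: w) = fun j => deg w j + (if j = a then 1 else 0) := by
  funext j
  simp only [deg, List.count_cons]
  congr 1
  rcases eq_or_ne j a with h | h
  · simp [h]
  · simp [h, Ne.symm h]

lemma deg_append (w x : Word r) : deg (w ++ x) = fun j => deg w j + deg x j := by
  funext j; simp [deg, List.count_append]

lemma pairW_eq_PWl (w : Word r) (i : Fin r) : pairW p w [i] = PWl p (deg w) i := by
  induction w with
  | nil => simp [pairW, PWl, deg_nil]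
  | cons a w ihw =>
    rw [show pairW p (a :: w) [i] = p a i + pairW p w [i] by simp [pairW], ihw]
    rw [PWl, PWl, deg_cons]
    rw [show ∑ j, ((deg w j + if j = a then 1 else 0 : ℕ) : ℤ) * p j i
        = ∑ j, (((deg w j : ℤ)) * p j i + (if j = a then (1:ℤ) else 0) * p j i) by
      congr 1; funext j; push_cast; ring]
    rw [Finset.sum_add_distrib]
    rw [show ∑ j, (if j = a then (1:ℤ) else 0) * p j i = p a i by
      rw [Finset.sum_congr rfl (fun j _ => by rw [ite_mul, one_mul, zero_mul]),
        Finset.sum_ite_eq' Finset.univ a (fun j => p j i)]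
      simp]
    ring

lemma pairW_eq_PWr (i : Fin r) (x : Word r) : pairW p [i] x = PWr p (deg x) i := by
  induction x with
  | nil => simp [pairW, PWr, deg_nil]
  | cons b x ihx =>
    rw [show pairW p [i] (b :: x) = p i b + pairW p [i] x by simp [pairW], ihx]
    rw [PWr, PWr, deg_cons]
    rw [show ∑ j, ((deg x j + if j = b then 1 else 0 : ℕ) : ℤ) * p i j
        = ∑ j, (((deg x j : ℤ)) * p i j + (if j = b then (1:ℤ) else 0) * p i j) by
      congr 1; funext j; push_cast; ring]
    rw [Finset.sum_add_distrib]
    rw [show ∑ j, (if j = b then (1:ℤ) else 0) * p i j = p i b by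
      rw [Finset.sum_congr rfl (fun j _ => by rw [ite_mul, one_mul, zero_mul]),
        Finset.sum_ite_eq' Finset.univ b (fun j => p i j)]
      simp]
    ring

end QShufDev
namespace QShufDev
variable {r : ℕ} (p : Fin r → Fin r → ℤ)
open Finsupp

lemma PWl_nil (i : Fin r) : PWl p (deg ([] : Word r)) i = 0 := by
  simp [PWl, deg]

lemma PWr_nil (i : Fin r) : PWr p (deg ([] : Word r)) i = 0 := by
  simp [PWr, deg]

lemma Rop_shuffle_single (i : Fin r) (w x : Word r) (c d : K) :
    Rop i (shuffle p (Finsupp.single w c) (Finsupp.single x d))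
      = shuffle p (Rop i (Finsupp.single w c)) (Finsupp.single x d)
        + (qq ^ (-(PWl p (deg w) i))) •
            shuffle p (Finsupp.single w c) (Rop i (Finsupp.single x d)) := by
  rcases List.eq_nil_or_concat w with hw | ⟨w', a, hw⟩ <;>
    rcases List.eq_nil_or_concat x with hx | ⟨x', b, hx⟩ <;>
    (try rw [List.concat_eq_append] at hw) <;> (try rw [List.concat_eq_append] at hx) <;>
    subst_vars
  · rw [shuffle_single_single, sh_nil_left, Rop_smul, Rop_single_nil, smul_zero,
      Rop_single_nil, Rop_single_nil, shuffle_zero_left, shuffle_zero_right, smul_zero, add_zero]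
  · rw [shuffle_single_single, sh_nil_left, Rop_smul, Rop_single_snoc, Rop_single_nil,
      Rop_single_snoc, shuffle_zero_left, PWl_nil, zero_add]
    rw [neg_zero, zpow_zero, one_smul]
    split_ifs
    · rw [shuffle_single_single, sh_nil_left]
    · simp
  · rw [shuffle_single_single, sh_nil_right, Rop_smul, Rop_single_snoc, Rop_single_snoc,
      Rop_single_nil, shuffle_zero_right, smul_zero, add_zero]
    split_ifs
    · rw [shuffle_single_single, sh_nil_right]
    · simp
  · rw [shuffle_single_single, sh_snoc_snoc, Rop_smul, Rop_add, Rop_smul,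
      Rop_mapDomain_snoc, Rop_mapDomain_snoc, Rop_single_snoc, Rop_single_snoc]
    split_ifs with h1 h2 h2
    · rw [shuffle_single_single, shuffle_single_single, smul_add, smul_smul, smul_smul,
        pairW_eq_PWl]
      subst h2
      ring_nf
    · rw [shuffle_single_single, shuffle_zero_right, smul_zero, smul_zero, smul_add,
        add_zero, smul_zero, add_zero]
    · rw [shuffle_zero_left, shuffle_single_single, zero_add, zero_add, smul_smul,
        smul_smul, pairW_eq_PWl]
      subst h2
      ring_nf
    · simp

lemma Lop_shuffle_single (i : Fin r) (w x : Word r) (c d : K) :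
    Lop i (shuffle p (Finsupp.single w c) (Finsupp.single x d))
      = (qq ^ (-(PWr p (deg x) i))) •
          shuffle p (Lop i (Finsupp.single w c)) (Finsupp.single x d)
        + shuffle p (Finsupp.single w c) (Lop i (Finsupp.single x d)) := by
  rcases w with - | ⟨a, w'⟩ <;> rcases x with - | ⟨b, x'⟩
  · rw [shuffle_single_single, sh_nil_left, Lop_smul, Lop_single_nil, Lop_single_nil,
      Lop_single_nil, shuffle_zero_left, shuffle_zero_right]
    simp
  · rw [shuffle_single_single, sh_nil_left, Lop_smul, Lop_single_cons, Lop_single_nil,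
      Lop_single_cons, shuffle_zero_left, smul_zero, zero_add]
    split_ifs
    · rw [shuffle_single_single, sh_nil_left]
    · simp
  · rw [shuffle_single_single, sh_nil_right, Lop_smul, Lop_single_cons, Lop_single_cons,
      Lop_single_nil, shuffle_zero_right, add_zero, PWr_nil]
    simp only [zpow_zero, neg_zero, one_smul]
    split_ifs
    · rw [shuffle_single_single, sh_nil_right]
    · simp
  · rw [shuffle_single_single, sh_cons_cons, Lop_smul, Lop_add, Lop_smul,
      Lop_mapDomain_cons, Lop_mapDomain_cons, Lop_single_cons, Lop_single_cons]
    split_ifs with h1 h2 h2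
    · rw [shuffle_single_single, shuffle_single_single, smul_add, smul_smul, smul_smul,
        pairW_eq_PWr]
      subst h1
      ring_nf
    · rw [shuffle_single_single, shuffle_zero_right, add_zero, smul_smul, smul_smul,
        pairW_eq_PWr]
      subst h1
      rw [add_zero]
      ring_nf
    · rw [shuffle_zero_left, shuffle_single_single, smul_zero, smul_zero, zero_add,
        zero_add]
    · simp

lemma Rop_shuffle (i : Fin r) (f g : FA r) (ν : Fin r → ℕ) (hf : Homog f ν) :
    Rop i (shuffle p f g)
      = shuffle p (Rop i f) g + (qq ^ (-(PWl p ν i))) • shuffle p f (Rop i g) := by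
  have hf' : f = ∑ w ∈ f.support, Finsupp.single w (f w) := (Finsupp.sum_single f).symm
  have hg' : g = ∑ x ∈ g.support, Finsupp.single x (g x) := (Finsupp.sum_single g).symm
  conv_lhs => rw [hf', hg']
  conv_rhs => rw [hf', hg']
  simp only [shuffle_sum_left, shuffle_sum_right, Rop_sum, Finset.smul_sum]
  rw [← Finset.sum_add_distrib]
  refine Finset.sum_congr rfl fun w hw => ?_
  rw [← Finset.sum_add_distrib]
  refine Finset.sum_congr rfl fun x hx => ?_
  rw [Rop_shuffle_single, hf x hx]

lemma Lop_shuffle (i : Fin r) (f g : FA r) (ν : Fin r → ℕ) (hg : Homog g ν) :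
    Lop i (shuffle p f g)
      = (qq ^ (-(PWr p ν i))) • shuffle p (Lop i f) g + shuffle p f (Lop i g) := by
  have hf' : f = ∑ w ∈ f.support, Finsupp.single w (f w) := (Finsupp.sum_single f).symm
  have hg' : g = ∑ x ∈ g.support, Finsupp.single x (g x) := (Finsupp.sum_single g).symm
  conv_lhs => rw [hf', hg']
  conv_rhs => rw [hf', hg']
  simp only [shuffle_sum_left, shuffle_sum_right, Lop_sum, Finset.smul_sum]
  rw [← Finset.sum_add_distrib]
  refine Finset.sum_congr rfl fun w hw => ?_
  rw [← Finset.sum_add_distrib]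
  refine Finset.sum_congr rfl fun x hx => ?_
  rw [Lop_shuffle_single, hg w hw]

end QShufDev
namespace QShufDev
variable {r : ℕ} (p : Fin r → Fin r → ℤ)
open Finsupp

lemma deg_reverse (w : Word r) : deg w.reverse = deg w := by
  funext j; simp [deg]

lemma shAux_support_deg_aux (n : ℕ) : ∀ (W X : Word r), W.length + X.length ≤ n →
    ∀ y ∈ (shAux p W X).support, deg y = fun j => deg W j + deg X j := by
  induction n with
  | zero =>
    intro W X hn y hy
    have hW : W = [] := by cases W <;> simp_all
    have hX : X = [] := by cases X <;> simp_all
    subst hW; subst hX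
    rw [shAux_nil_left] at hy
    have := Finsupp.support_single_subset hy
    simp only [Finset.mem_singleton, List.reverse_nil] at this
    subst this
    funext j; simp [deg]
  | succ n ih =>
    intro W X hn y hy
    cases W with
    | nil =>
      rw [shAux_nil_left] at hy
      have := Finsupp.support_single_subset hy
      simp only [Finset.mem_singleton] at this
      subst this
      rw [deg_reverse]
      funext j; simp [deg]
    | cons a w =>
      cases X with
      | nil =>
        rw [shAux_nil_right] at hy
        have := Finsupp.support_single_subset hy
        simp only [Finset.mem_singleton] at this
        subst this
        rw [deg_reverse]
        funext j; simp [deg]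
      | cons b x =>
        rw [shAux] at hy
        have hy' := Finsupp.support_add hy
        simp only [Finset.mem_union] at hy'
        rcases hy' with hy' | hy'
        · have := Finsupp.mapDomain_support hy'
          simp only [Finset.mem_image] at this
          obtain ⟨u, hu, rfl⟩ := this
          have hdu := ih w (b :: x) (by simp at hn ⊢; omega) u hu
          funext j
          have h1 := congrFun hdu j
          simp only [deg, List.count_append, List.count_cons, List.count_singleton,
            List.count_nil, beq_iff_eq] at h1 ⊢
          split_ifs at h1 ⊢ <;> omega
        · have hy'' := Finsupp.support_smul hy'
          have := Finsupp.mapDomain_support hy''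
          simp only [Finset.mem_image] at this
          obtain ⟨u, hu, rfl⟩ := this
          have hdu := ih (a :: w) x (by simp at hn ⊢; omega) u hu
          funext j
          have h1 := congrFun hdu j
          simp only [deg, List.count_append, List.count_cons, List.count_singleton,
            List.count_nil, beq_iff_eq] at h1 ⊢
          split_ifs at h1 ⊢ <;> omega

lemma sh_support_deg (w x : Word r) (y : Word r) (hy : y ∈ (sh p w x).support) :
    deg y = fun j => deg w j + deg x j := by
  have := shAux_support_deg_aux p (w.reverse.length + x.reverse.length) w.reverse x.reverse
    le_rfl y hy
  rw [deg_reverse, deg_reverse] at this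
  exact this

lemma Homog_shuffle {f g : FA r} {ν₁ ν₂ : Fin r → ℕ} (hf : Homog f ν₁) (hg : Homog g ν₂) :
    Homog (shuffle p f g) (fun j => ν₁ j + ν₂ j) := by
  intro y hy
  unfold shuffle at hy
  have h1 := Finsupp.support_sum hy
  simp only [Finset.mem_biUnion] at h1
  obtain ⟨w, hw, h2⟩ := h1
  have h3 := Finsupp.support_sum h2
  simp only [Finset.mem_biUnion] at h3
  obtain ⟨x, hx, h4⟩ := h3
  have h5 := Finsupp.support_smul h4
  have h6 := sh_support_deg p w x y h5
  rw [hf w hw, hg x hx] at h6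
  exact h6

/-- homogeneous projection -/
def proj (ν : Fin r → ℕ) (f : FA r) : FA r := f.filter (fun w => deg w = ν)

lemma proj_apply (ν : Fin r → ℕ) (f : FA r) (w : Word r) :
    proj ν f w = if deg w = ν then f w else 0 := Finsupp.filter_apply _ _ _

lemma Homog_proj (ν : Fin r → ℕ) (f : FA r) : Homog (proj ν f) ν := by
  intro w hw
  rw [proj, Finsupp.support_filter, Finset.mem_filter] at hw
  exact hw.2

lemma proj_add (ν : Fin r → ℕ) (f g : FA r) : proj ν (f + g) = proj ν f + proj ν g :=
  Finsupp.filter_add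

lemma proj_smul (ν : Fin r → ℕ) (c : K) (f : FA r) : proj ν (c • f) = c • proj ν f := by
  ext w
  rw [proj_apply, Finsupp.smul_apply, Finsupp.smul_apply, proj_apply]
  split_ifs <;> simp

lemma proj_of_homog {f : FA r} {ν : Fin r → ℕ} (hf : Homog f ν) : proj ν f = f := by
  ext w
  rw [proj_apply]
  by_cases h : f w = 0
  · rw [h]; split_ifs <;> rfl
  · rw [if_pos (hf w (Finsupp.mem_support_iff.2 h))]

lemma proj_of_homog_ne {f : FA r} {μ ν : Fin r → ℕ} (hf : Homog f μ) (h : μ ≠ ν) :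
    proj ν f = 0 := by
  ext w
  rw [proj_apply]
  by_cases hw : f w = 0
  · rw [hw]; split_ifs <;> rfl
  · rw [if_neg (by rw [hf w (Finsupp.mem_support_iff.2 hw)]; exact h)]
    rfl

lemma sum_proj (f : FA r) : f = ∑ ν ∈ f.support.image deg, proj ν f := by
  ext w
  rw [Finsupp.finset_sum_apply]
  rw [Finset.sum_congr rfl (fun ν _ => proj_apply ν f w)]
  rw [Finset.sum_ite_eq (f.support.image deg) (deg w) (fun _ => f w)]
  by_cases h : f w = 0
  · rw [h]; split_ifs <;> rfl
  · rw [if_pos (Finset.mem_image_of_mem deg (Finsupp.mem_support_iff.2 h))]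

lemma InU_zero : InU p (0 : FA r) := by
  have := InU.smul (p := p) 0 (InU.one)
  rwa [zero_smul] at this

lemma InU_sum {ι : Type*} (s : Finset ι) (F : ι → FA r) (h : ∀ i ∈ s, InU p (F i)) :
    InU p (∑ i ∈ s, F i) := by
  classical
  induction s using Finset.induction_on with
  | empty => simpa using InU_zero p
  | insert _ _ hni ih =>
    rw [Finset.sum_insert hni]
    exact InU.add (h _ (Finset.mem_insert_self _ _))
      (ih fun i hi => h i (Finset.mem_insert_of_mem hi))

lemma proj_sum {ι : Type*} (ν : Fin r → ℕ) (s : Finset ι) (F : ι → FA r) :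
    proj ν (∑ i ∈ s, F i) = ∑ i ∈ s, proj ν (F i) :=
  map_sum (AddMonoidHom.mk' (fun f => proj ν f) (fun f g => proj_add ν f g)) F s

lemma shuffle_decomp (f g : FA r) :
    shuffle p f g = ∑ μ₁ ∈ f.support.image deg, ∑ μ₂ ∈ g.support.image deg,
      shuffle p (proj μ₁ f) (proj μ₂ g) := by
  conv_lhs => rw [sum_proj f, sum_proj g]
  rw [shuffle_sum_left]
  exact Finset.sum_congr rfl fun μ₁ _ => shuffle_sum_right p _ _ _

lemma InU_proj {f : FA r} (hf : InU p f) (ν : Fin r → ℕ) : InU p (proj ν f) := by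
  induction hf generalizing ν with
  | letter i =>
    by_cases h : deg [i] = ν
    · rw [proj_of_homog (fun w hw => by
        have := Finsupp.support_single_subset hw
        simp only [Finset.mem_singleton] at this
        subst this; exact h)]
      exact InU.letter i
    · rw [proj_of_homog_ne (fun w hw => by
        have := Finsupp.support_single_subset hw
        simp only [Finset.mem_singleton] at this
        subst this; rfl) h]
      exact InU_zero p
  | one =>
    by_cases h : deg ([] : Word r) = ν
    · rw [proj_of_homog (fun w hw => by
        have := Finsupp.support_single_subset hw
        simp only [Finset.mem_singleton] at this
        subst this; exact h)]
      exact InU.one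
    · rw [proj_of_homog_ne (fun w hw => by
        have := Finsupp.support_single_subset hw
        simp only [Finset.mem_singleton] at this
        subst this; rfl) h]
      exact InU_zero p
  | add hf hg ihf ihg => rw [proj_add]; exact InU.add (ihf ν) (ihg ν)
  | smul c hf ihf => rw [proj_smul]; exact InU.smul c (ihf ν)
  | @mul f g hf hg ihf ihg =>
    rw [shuffle_decomp]
    rw [show proj ν (∑ μ₁ ∈ f.support.image deg, ∑ μ₂ ∈ g.support.image deg,
          shuffle p (proj μ₁ f) (proj μ₂ g))
        = ∑ μ₁ ∈ f.support.image deg, ∑ μ₂ ∈ g.support.image deg,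
          proj ν (shuffle p (proj μ₁ f) (proj μ₂ g)) by
      rw [proj_sum]
      exact Finset.sum_congr rfl fun μ₁ _ => proj_sum ν _ _]
    apply InU_sum
    intro μ₁ _
    apply InU_sum
    intro μ₂ _
    have hh : Homog (shuffle p (proj μ₁ f) (proj μ₂ g)) (fun j => μ₁ j + μ₂ j) :=
      Homog_shuffle p (Homog_proj μ₁ f) (Homog_proj μ₂ g)
    by_cases h : (fun j => μ₁ j + μ₂ j) = ν
    · rw [proj_of_homog (h ▸ hh)]
      exact InU.mul (ihf μ₁) (ihg μ₂)
    · rw [proj_of_homog_ne hh h]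
      exact InU_zero p

end QShufDev
namespace QShufDev
variable {r : ℕ} (p : Fin r → Fin r → ℤ)
open Finsupp

lemma InU_Rop_proj (i : Fin r) {f : FA r} (hf : InU p f) :
    ∀ ν : Fin r → ℕ, InU p (Rop i (proj ν f)) := by
  induction hf with
  | letter j =>
    intro ν
    by_cases h : deg [j] = ν
    · rw [proj_of_homog (fun w hw => by
        have := Finsupp.support_single_subset hw
        simp only [Finset.mem_singleton] at this
        subst this; exact h)]
      rw [show ([j] : Word r) = [] ++ [j] from rfl, Rop_single_snoc]
      split_ifs
      · exact InU.one
      · exact InU_zero p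
    · rw [proj_of_homog_ne (fun w hw => by
        have := Finsupp.support_single_subset hw
        simp only [Finset.mem_singleton] at this
        subst this; rfl) h, Rop_zero]
      exact InU_zero p
  | one =>
    intro ν
    by_cases h : deg ([] : Word r) = ν
    · rw [proj_of_homog (fun w hw => by
        have := Finsupp.support_single_subset hw
        simp only [Finset.mem_singleton] at this
        subst this; exact h), Rop_single_nil]
      exact InU_zero p
    · rw [proj_of_homog_ne (fun w hw => by
        have := Finsupp.support_single_subset hw
        simp only [Finset.mem_singleton] at this
        subst this; rfl) h, Rop_zero]
      exact InU_zero p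
  | add hf hg ihf ihg => intro ν; rw [proj_add, Rop_add]; exact InU.add (ihf ν) (ihg ν)
  | smul c hf ihf => intro ν; rw [proj_smul, Rop_smul]; exact InU.smul c (ihf ν)
  | @mul f g hf hg ihf ihg =>
    intro ν
    rw [shuffle_decomp]
    simp only [proj_sum, Rop_sum]
    apply InU_sum
    intro μ₁ _
    apply InU_sum
    intro μ₂ _
    by_cases h : (fun j => μ₁ j + μ₂ j) = ν
    · rw [proj_of_homog (h ▸ Homog_shuffle p (Homog_proj μ₁ f) (Homog_proj μ₂ g)),
        Rop_shuffle p i _ _ μ₁ (Homog_proj μ₁ f)]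
      exact InU.add (InU.mul (ihf μ₁) (InU_proj p hg μ₂))
        (InU.smul _ (InU.mul (InU_proj p hf μ₁) (ihg μ₂)))
    · rw [proj_of_homog_ne (Homog_shuffle p (Homog_proj μ₁ f) (Homog_proj μ₂ g)) h, Rop_zero]
      exact InU_zero p

lemma InU_Lop_proj (i : Fin r) {f : FA r} (hf : InU p f) :
    ∀ ν : Fin r → ℕ, InU p (Lop i (proj ν f)) := by
  induction hf with
  | letter j =>
    intro ν
    by_cases h : deg [j] = ν
    · rw [proj_of_homog (fun w hw => by
        have := Finsupp.support_single_subset hw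
        simp only [Finset.mem_singleton] at this
        subst this; exact h)]
      rw [Lop_single_cons]
      split_ifs
      · exact InU.one
      · exact InU_zero p
    · rw [proj_of_homog_ne (fun w hw => by
        have := Finsupp.support_single_subset hw
        simp only [Finset.mem_singleton] at this
        subst this; rfl) h, Lop_zero]
      exact InU_zero p
  | one =>
    intro ν
    by_cases h : deg ([] : Word r) = ν
    · rw [proj_of_homog (fun w hw => by
        have := Finsupp.support_single_subset hw
        simp only [Finset.mem_singleton] at this
        subst this; exact h), Lop_single_nil]
      exact InU_zero p
    · rw [proj_of_homog_ne (fun w hw => by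
        have := Finsupp.support_single_subset hw
        simp only [Finset.mem_singleton] at this
        subst this; rfl) h, Lop_zero]
      exact InU_zero p
  | add hf hg ihf ihg => intro ν; rw [proj_add, Lop_add]; exact InU.add (ihf ν) (ihg ν)
  | smul c hf ihf => intro ν; rw [proj_smul, Lop_smul]; exact InU.smul c (ihf ν)
  | @mul f g hf hg ihf ihg =>
    intro ν
    rw [shuffle_decomp]
    simp only [proj_sum, Lop_sum]
    apply InU_sum
    intro μ₁ _
    apply InU_sum
    intro μ₂ _
    by_cases h : (fun j => μ₁ j + μ₂ j) = ν
    · rw [proj_of_homog (h ▸ Homog_shuffle p (Homog_proj μ₁ f) (Homog_proj μ₂ g)),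
        Lop_shuffle p i _ _ μ₂ (Homog_proj μ₂ g)]
      exact InU.add (InU.smul _ (InU.mul (ihf μ₁) (InU_proj p hg μ₂)))
        (InU.mul (InU_proj p hf μ₁) (ihg μ₂))
    · rw [proj_of_homog_ne (Homog_shuffle p (Homog_proj μ₁ f) (Homog_proj μ₂ g)) h, Lop_zero]
      exact InU_zero p

lemma InU_Rop_homog (i : Fin r) {f : FA r} {ν : Fin r → ℕ} (hU : InU p f) (hH : Homog f ν) :
    InU p (Rop i f) := by
  have := InU_Rop_proj p i hU ν
  rwa [proj_of_homog hH] at this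

lemma InU_Lop_homog (i : Fin r) {f : FA r} {ν : Fin r → ℕ} (hU : InU p f) (hH : Homog f ν) :
    InU p (Lop i f) := by
  have := InU_Lop_proj p i hU ν
  rwa [proj_of_homog hH] at this

lemma Homog_Rop {f : FA r} {ν : Fin r → ℕ} (hH : Homog f ν) (i : Fin r) :
    Homog (Rop i f) (fun j => ν j - (if j = i then 1 else 0)) := by
  intro y hy
  rw [Finsupp.mem_support_iff, Rop_apply] at hy
  have hd := hH (y ++ [i]) (Finsupp.mem_support_iff.2 hy)
  funext j
  have h1 := congrFun hd j
  simp only [deg, List.count_append, List.count_cons, List.count_singleton,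
    List.count_nil, beq_iff_eq] at h1 ⊢
  split_ifs at h1 ⊢ <;> omega

lemma Homog_Lop {f : FA r} {ν : Fin r → ℕ} (hH : Homog f ν) (i : Fin r) :
    Homog (Lop i f) (fun j => ν j - (if j = i then 1 else 0)) := by
  intro y hy
  rw [Finsupp.mem_support_iff, Lop_apply] at hy
  have hd := hH (i :: y) (Finsupp.mem_support_iff.2 hy)
  funext j
  have h1 := congrFun hd j
  simp only [deg, List.count_append, List.count_cons, List.count_singleton,
    List.count_nil, beq_iff_eq] at h1 ⊢
  split_ifs at h1 ⊢ <;> omega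

/-- iterated right deletion: `(RopW z f) y = f (y ++ z)` -/
def RopW (z : Word r) (f : FA r) : FA r := z.foldr (fun i g => Rop i g) f

/-- iterated left deletion: `(LopW u f) y = f (u ++ y)` -/
def LopW (u : Word r) (f : FA r) : FA r := u.foldl (fun g i => Lop i g) f

lemma RopW_apply (z : Word r) (f : FA r) (y : Word r) : RopW z f y = f (y ++ z) := by
  induction z generalizing y with
  | nil => rw [List.append_nil]; rfl
  | cons i z ih =>
    show Rop i (RopW z f) y = _
    rw [Rop_apply, ih]
    congr 1
    simp

lemma LopW_apply (u : Word r) (f : FA r) (y : Word r) : LopW u f y = f (u ++ y) := by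
  induction u generalizing f y with
  | nil => rfl
  | cons i u ih =>
    show LopW u (Lop i f) y = _
    rw [ih, Lop_apply]
    rfl

lemma RopW_closure (z : Word r) {f : FA r} {ν : Fin r → ℕ} (hU : InU p f) (hH : Homog f ν) :
    InU p (RopW z f) ∧ ∃ ν', Homog (RopW z f) ν' := by
  induction z with
  | nil => exact ⟨hU, ν, hH⟩
  | cons i z ih =>
    obtain ⟨hU', ν', hH'⟩ := ih
    exact ⟨InU_Rop_homog p i hU' hH', _, Homog_Rop hH' i⟩

lemma LopW_closure (u : Word r) {f : FA r} {ν : Fin r → ℕ} (hU : InU p f) (hH : Homog f ν) :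
    InU p (LopW u f) ∧ ∃ ν', Homog (LopW u f) ν' := by
  induction u generalizing f ν with
  | nil => exact ⟨hU, ν, hH⟩
  | cons i u ih =>
    exact ih (InU_Lop_homog p i hU hH) (Homog_Lop hH i)

lemma wlt_asymm : ∀ {w x : Word r}, wlt w x → wlt x w → False := by
  intro w x h1
  induction h1 with
  | nil => intro h2; cases h2
  | rel hab =>
    intro h2
    cases h2 with
    | rel h => exact absurd hab (lt_asymm h)
    | cons h => exact lt_irrefl _ hab
  | cons h ih =>
    intro h2
    cases h2 with
    | rel h' => exact lt_irrefl _ h'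
    | cons h' => exact ih h'

lemma wlt_trichot : ∀ (w x : Word r), wlt w x ∨ w = x ∨ wlt x w := by
  intro w
  induction w with
  | nil =>
    intro x
    cases x with
    | nil => exact Or.inr (Or.inl rfl)
    | cons b x => exact Or.inl List.Lex.nil
  | cons a w ih =>
    intro x
    cases x with
    | nil => exact Or.inr (Or.inr List.Lex.nil)
    | cons b x =>
      rcases lt_trichotomy a b with h | h | h
      · exact Or.inl (List.Lex.rel h)
      · subst h
        rcases ih x with h | h | h
        · exact Or.inl (List.Lex.cons h)
        · exact Or.inr (Or.inl (by rw [h]))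
        · exact Or.inr (Or.inr (List.Lex.cons h))
      · exact Or.inr (Or.inr (List.Lex.rel h))

lemma wlt_append_right {w x : Word r} (z : Word r) (h : wlt w x) (hl : w.length = x.length) :
    wlt (w ++ z) (x ++ z) := by
  induction h with
  | nil => simp at hl
  | rel hab => exact List.Lex.rel hab
  | cons h ih => exact List.Lex.cons (ih (by simpa using hl))

lemma wle_append_right_cancel {w x : Word r} (z : Word r) (hl : w.length = x.length)
    (h : wle (w ++ z) (x ++ z)) : wle w x := by
  rcases wlt_trichot w x with h1 | h1 | h1
  · exact Or.inl h1
  · exact Or.inr h1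
  · exfalso
    rcases h with h | h
    · exact wlt_asymm h (wlt_append_right z h1 hl.symm)
    · have hwx : w = x := List.append_left_injective z h
      subst hwx
      exact wlt_asymm h1 h1
  
lemma wle_append_left_cancel {w x : Word r} (u : Word r) (h : wle (u ++ w) (u ++ x)) :
    wle w x := by
  induction u with
  | nil => exact h
  | cons a u ih =>
    apply ih
    rcases h with h | h
    · cases h with
      | rel h' => exact absurd h' (lt_irrefl a)
      | cons h' => exact Or.inl h'
    · exact Or.inr (by injection h)

lemma word_length_eq (l : Word r) : l.length = ∑ j, deg l j := by
  induction l with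
  | nil => simp [deg]
  | cons a l ih =>
    rw [List.length_cons, ih]
    rw [show ∑ j, deg (a :: l) j = ∑ j, (deg l j + if j = a then 1 else 0) by
      refine Finset.sum_congr rfl fun j _ => ?_
      rw [deg_cons]]
    rw [Finset.sum_add_distrib, Finset.sum_ite_eq' Finset.univ a (fun _ => 1),
      if_pos (Finset.mem_univ a)]

end QShufDev
/-- Lemma 3.4: every factor of a good word is good. -/
theorem factor_of_good_is_good {r : ℕ} (hr : 1 ≤ r) (C : CartanData r)
    (u v z : Word r) (h : IsGood C.p (u ++ v ++ z)) :
    IsGood C.p v := by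
  classical
  obtain ⟨f, hU, ⟨ν, hH⟩, hne, hmax⟩ := h
  -- Step 1: strip the suffix `z` using iterated right deletions.
  obtain ⟨hU1, ν1, hH1⟩ := QShufDev.RopW_closure C.p z hU hH
  have hg1 : ∀ y, QShufDev.RopW z f y = f (y ++ z) := QShufDev.RopW_apply z f
  have hne1 : QShufDev.RopW z f (u ++ v) ≠ 0 := by
    rw [hg1]; exact hne
  have hmax1 : ∀ w ∈ (QShufDev.RopW z f).support, wle w (u ++ v) := by
    intro w hw
    have hwz : w ++ z ∈ f.support := by
      rw [Finsupp.mem_support_iff] at hw ⊢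
      rwa [hg1] at hw
    have hlen : w.length = (u ++ v).length := by
      rw [QShufDev.word_length_eq, QShufDev.word_length_eq,
        hH1 w hw, hH1 (u ++ v) (Finsupp.mem_support_iff.2 hne1)]
    exact QShufDev.wle_append_right_cancel z hlen (hmax (w ++ z) hwz)
  -- Step 2: strip the prefix `u` using iterated left deletions.
  obtain ⟨hU2, ν2, hH2⟩ := QShufDev.LopW_closure C.p u hU1 hH1
  have hg2 : ∀ y, QShufDev.LopW u (QShufDev.RopW z f) y = QShufDev.RopW z f (u ++ y) :=
    QShufDev.LopW_apply u _
  refine ⟨QShufDev.LopW u (QShufDev.RopW z f), hU2, ⟨ν2, hH2⟩, ?_, ?_⟩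
  · rw [hg2]; exact hne1
  · intro w hw
    have huw : u ++ w ∈ (QShufDev.RopW z f).support := by
      rw [Finsupp.mem_support_iff] at hw ⊢
      rwa [hg2] at hw
    exact QShufDev.wle_append_left_cancel u (hmax1 (u ++ w) huw)
end
end

section
/- A word w is good if and only if Ξ(w) does not lie in the ℚ(q)-linear span of {Ξ(v) : v ∈ M, |v| = |w|, v > w}. -/
open scoped BigOperators

noncomputable section

variable {r : ℕ}

/-- `Ξ` on a word: the q-shuffle product of its letters. -/
def xiWord (p : Fin r → Fin r → ℤ) : Word r → FA r
  | [] => Finsupp.single ([] : Word r) 1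
  | i :: w => shuffle p (Finsupp.single [i] 1) (xiWord p w)

section Lemmas

variable {p : Fin r → Fin r → ℤ}

lemma shAux_nil_left (x : Word r) : shAux p [] x = Finsupp.single x.reverse 1 := by
  rw [shAux]

lemma shAux_nil_right (w : Word r) : shAux p w [] = Finsupp.single w.reverse 1 := by
  match w with
  | [] => rw [shAux]
  | a :: w =>
    rw [shAux]
    exact fun h => by simp at h

lemma shAux_cons_cons (a b : Fin r) (w x : Word r) :
    shAux p (a :: w) (b :: x) =
      Finsupp.mapDomain (fun u => u ++ [a]) (shAux p w (b :: x))
      + (qq ^ (-(pairW p (a :: w) [b]))) •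
          Finsupp.mapDomain (fun u => u ++ [b]) (shAux p (a :: w) x) := by
  rw [shAux]

lemma shuffle_single_single (w x : Word r) (c d : K) :
    shuffle p (Finsupp.single w c) (Finsupp.single x d)
      = (c * d) • shAux p w.reverse x.reverse := by
  rw [shuffle, Finsupp.sum_single_index, Finsupp.sum_single_index]
  · simp
  · rw [Finsupp.sum_single_index] <;> simp

lemma shuffle_zero_left (g : FA r) : shuffle p 0 g = 0 := by simp [shuffle]

lemma shuffle_zero_right (f : FA r) : shuffle p f 0 = 0 := by simp [shuffle]

lemma shuffle_add_left (f₁ f₂ g : FA r) :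
    shuffle p (f₁ + f₂) g = shuffle p f₁ g + shuffle p f₂ g := by
  unfold shuffle
  rw [Finsupp.sum_add_index']
  · intro w; simp
  · intro w c₁ c₂
    rw [← Finsupp.sum_add]
    congr 1; funext x d
    rw [add_mul, add_smul]

lemma shuffle_add_right (f g₁ g₂ : FA r) :
    shuffle p f (g₁ + g₂) = shuffle p f g₁ + shuffle p f g₂ := by
  unfold shuffle
  rw [← Finsupp.sum_add]
  congr 1; funext w c
  rw [Finsupp.sum_add_index']
  · intro x; simp
  · intro x d₁ d₂; rw [mul_add, add_smul]

lemma shuffle_smul_left (c : K) (f g : FA r) :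
    shuffle p (c • f) g = c • shuffle p f g := by
  unfold shuffle
  rw [Finsupp.sum_smul_index', Finsupp.smul_sum]
  · congr 1; funext w b
    rw [Finsupp.smul_sum]
    congr 1; funext x d
    rw [smul_eq_mul, smul_smul, mul_assoc]
  · intro w; simp

lemma shuffle_smul_right (c : K) (f g : FA r) :
    shuffle p f (c • g) = c • shuffle p f g := by
  unfold shuffle
  rw [Finsupp.smul_sum]
  congr 1; funext w b
  rw [Finsupp.sum_smul_index', Finsupp.smul_sum]
  · congr 1; funext x d
    rw [smul_eq_mul, smul_smul, mul_left_comm]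
  · intro x; simp

/-- Left multiplication by the letter `i`, as a linear map. -/
def lmul (p : Fin r → Fin r → ℤ) (i : Fin r) : FA r →ₗ[K] FA r where
  toFun f := shuffle p (Finsupp.single [i] 1) f
  map_add' f g := shuffle_add_right _ _ _
  map_smul' c f := shuffle_smul_right c _ _

lemma lmul_apply (i : Fin r) (f : FA r) :
    lmul p i f = shuffle p (Finsupp.single [i] 1) f := rfl

def wtt (p : Fin r → Fin r → ℤ) (i : Fin r) (y : Word r) : K := qq ^ (-(y.map (p i ·)).sum)

lemma qq_ne_zero : (qq : K) ≠ 0 := RatFunc.X_ne_zero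

lemma wtt_nil (i : Fin r) : wtt p i [] = 1 := by simp [wtt]

lemma wtt_append (i : Fin r) (y z : Word r) :
    wtt p i (y ++ z) = wtt p i y * wtt p i z := by
  simp [wtt, neg_add, zpow_add₀ qq_ne_zero, mul_comm]

lemma insertIdx_append_left (i : Fin r) :
    ∀ (w : Word r) (k : ℕ), k ≤ w.length → ∀ t : Word r,
      (w ++ t).insertIdx k i = w.insertIdx k i ++ t := by
  intro w
  induction w with
  | nil =>
    intro k hk t
    have hk0 : k = 0 := by simpa using hk
    subst hk0; simp
  | cons a w ih =>
    intro k hk t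
    cases k with
    | zero => simp
    | succ k =>
      simp only [List.length_cons, Nat.succ_le_succ_iff] at hk
      simp [List.insertIdx_succ_cons, ih k hk t]

lemma mapDomain_finset_sum (h : Word r → Word r) {s : Finset ℕ} (g : ℕ → FA r) :
    Finsupp.mapDomain h (∑ k ∈ s, g k) = ∑ k ∈ s, Finsupp.mapDomain h (g k) :=
  map_sum (Finsupp.mapDomain.addMonoidHom h) g s

/-- `w_i * z` : inserting the letter `i` in all positions of `z`. -/
lemma sh_single (i : Fin r) (z : Word r) :
    shAux p [i] z.reverse = ∑ k ∈ Finset.range (z.length + 1),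
      wtt p i (z.drop k) • Finsupp.single (z.insertIdx k i) (1 : K) := by
  induction z using List.reverseRecOn with
  | nil => simp [shAux_nil_right, wtt_nil]
  | append_singleton z b ih =>
    have e1 : (z ++ [b]).reverse = b :: z.reverse := by simp
    rw [e1, shAux_cons_cons, shAux_nil_left]
    have e2 : (b :: z.reverse).reverse = z ++ [b] := by simp
    rw [e2, ih, Finsupp.mapDomain_single, mapDomain_finset_sum]
    simp only [Finsupp.mapDomain_smul, Finsupp.mapDomain_single]
    have hlen : (z ++ [b]).length = z.length + 1 := by simp
    rw [hlen]
    conv_rhs => rw [Finset.sum_range_succ]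
    have hd : (z ++ [b]).drop (z.length + 1) = [] := List.drop_eq_nil_of_le (by simp)
    have hi : (z ++ [b]).insertIdx (z.length + 1) i = z ++ [b] ++ [i] := by
      conv_lhs => rw [show z.length + 1 = (z ++ [b]).length by simp]
      rw [List.insertIdx_length_self]
    rw [hd, hi, wtt_nil, one_smul, add_comm, Finset.smul_sum]
    congr 1
    refine Finset.sum_congr rfl fun k hk => ?_
    rw [Finset.mem_range, Nat.lt_succ_iff] at hk
    rw [smul_smul, List.drop_append_of_le_length hk, insertIdx_append_left i z k hk [b],
      wtt_append]
    congr 1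
    have hb : wtt p i [b] = qq ^ (-(pairW p [i] [b])) := by simp [wtt, pairW]
    rw [hb, mul_comm]

lemma getElem?_insertIdx_self (z : Word r) (k : ℕ) (i : Fin r) (hk : k ≤ z.length) :
    (z.insertIdx k i)[k]? = some i := by
  rw [List.getElem?_eq_some_iff]
  refine ⟨by rw [List.length_insertIdx_of_le_length hk]; omega, ?_⟩
  exact List.getElem_insertIdx_self _

lemma drop_insertIdx_succ (i : Fin r) :
    ∀ (z : Word r) (k : ℕ), k ≤ z.length → (z.insertIdx k i).drop (k+1) = z.drop k := by
  intro z
  induction z with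
  | nil =>
    intro k hk
    have hk0 : k = 0 := by simpa using hk
    subst hk0; simp
  | cons a t ih =>
    intro k hk
    cases k with
    | zero => simp
    | succ k =>
      simp only [List.length_cons, Nat.succ_le_succ_iff] at hk
      simp [List.insertIdx_succ_cons, ih k hk]

lemma insertIdx_eraseIdx_self {x : Word r} {k : ℕ} {i : Fin r}
    (hk : k < x.length) (hv : x[k] = i) : (x.eraseIdx k).insertIdx k i = x := by
  induction x generalizing k with
  | nil => simp at hk
  | cons a t ih =>
    cases k with
    | zero => simp_all
    | succ k =>
      simp only [List.length_cons, Nat.succ_lt_succ_iff] at hk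
      simp only [List.getElem_cons_succ] at hv
      simp [List.eraseIdx_cons_succ, List.insertIdx_succ_cons, ih hk hv]

/-- matching the insertion-indexed and the removal-indexed sums -/
lemma ins_coeff (i : Fin r) (z x : Word r) :
    (∑ k ∈ Finset.range (z.length + 1),
      wtt p i (z.drop k) • Finsupp.single (z.insertIdx k i) (1 : K)) x
    = ∑ k ∈ Finset.range x.length,
        if x[k]? = some i ∧ x.eraseIdx k = z then wtt p i (x.drop (k+1)) else 0 := by
  rw [Finset.sum_apply']
  by_cases hlen : x.length = z.length + 1
  · rw [hlen]
    refine Finset.sum_congr rfl fun k hk => ?_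
    rw [Finset.mem_range, Nat.lt_succ_iff] at hk
    rw [Finsupp.smul_apply, Finsupp.single_apply]
    by_cases he : z.insertIdx k i = x
    · have h1 : x[k]? = some i := he ▸ getElem?_insertIdx_self z k i hk
      have h2 : x.eraseIdx k = z := by rw [← he, List.eraseIdx_insertIdx_self]
      have h3 : x.drop (k+1) = z.drop k := by rw [← he, drop_insertIdx_succ i z k hk]
      rw [if_pos he, if_pos ⟨h1, h2⟩, h3, smul_eq_mul, mul_one]
    · rw [if_neg he, smul_zero]
      rw [eq_comm]
      rw [ite_eq_right_iff]
      rintro ⟨h1, h2⟩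
      obtain ⟨hklt, hgv⟩ := List.getElem?_eq_some_iff.mp h1
      exact absurd (h2 ▸ insertIdx_eraseIdx_self hklt hgv) he
  · have hL : ∀ k ∈ Finset.range (z.length + 1),
        (wtt p i (z.drop k) • Finsupp.single (z.insertIdx k i) (1:K)) x = 0 := by
      intro k hk
      rw [Finset.mem_range, Nat.lt_succ_iff] at hk
      rw [Finsupp.smul_apply, Finsupp.single_apply, if_neg, smul_zero]
      intro he
      apply hlen
      rw [← he, List.length_insertIdx_of_le_length hk]
    have hR : ∀ k ∈ Finset.range x.length,
        (if x[k]? = some i ∧ x.eraseIdx k = z then wtt p i (x.drop (k+1)) else 0) = 0 := by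
      intro k hk
      rw [Finset.mem_range] at hk
      rw [ite_eq_right_iff]
      rintro ⟨h1, h2⟩
      exact absurd (by rw [← h2, List.length_eraseIdx_add_one hk]) (Ne.symm hlen ∘ Eq.symm)
    rw [Finset.sum_congr rfl hL, Finset.sum_congr rfl hR, Finset.sum_const_zero,
      Finset.sum_const_zero]

/-- The key formula for left multiplication by a letter. -/
lemma lmul_apply_coeff (i : Fin r) (f : FA r) (x : Word r) :
    (shuffle p (Finsupp.single [i] 1) f) x
    = ∑ k ∈ Finset.range x.length,
        if x[k]? = some i then wtt p i (x.drop (k+1)) * f (x.eraseIdx k) else 0 := by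
  have h1 : shuffle p (Finsupp.single [i] 1) f
      = f.sum fun z d => d • shAux p [i] z.reverse := by
    rw [shuffle, Finsupp.sum_single_index (by simp)]
    refine Finsupp.sum_congr fun z _ => ?_
    rw [one_mul]
    norm_num
  rw [h1, Finsupp.sum_apply]
  have h2 : ∀ z ∈ f.support, (f z • shAux p [i] z.reverse) x
      = ∑ k ∈ Finset.range x.length,
          (if x[k]? = some i ∧ x.eraseIdx k = z then wtt p i (x.drop (k+1)) * f z else 0) := by
    intro z _
    rw [Finsupp.smul_apply, sh_single, ins_coeff, smul_eq_mul, Finset.mul_sum]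
    refine Finset.sum_congr rfl fun k _ => ?_
    rw [mul_ite, mul_zero, mul_comm]
  rw [Finsupp.sum, Finset.sum_congr rfl h2, Finset.sum_comm]
  refine Finset.sum_congr rfl fun k _ => ?_
  by_cases hc : x[k]? = some i
  · rw [if_pos hc]
    simp only [hc, true_and]
    rw [Finset.sum_ite_eq f.support (x.eraseIdx k) (fun z => wtt p i (x.drop (k+1)) * f z)]
    by_cases hmem : x.eraseIdx k ∈ f.support
    · rw [if_pos hmem]
    · rw [if_neg hmem, Finsupp.notMem_support_iff.mp hmem, mul_zero]
  · rw [if_neg hc]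
    simp only [hc, false_and, if_false, Finset.sum_const_zero]

lemma wtt_perm (p : Fin r → Fin r → ℤ) (i : Fin r) {y z : Word r} (h : y.Perm z) :
    wtt p i y = wtt p i z := by
  simp [wtt, (h.map (p i ·)).sum_eq]

def cf (p : Fin r → Fin r → ℤ) : Word r → Word r → K
  | [], x => if x = [] then 1 else 0
  | i :: v, x => ∑ k ∈ Finset.range x.length,
      if x[k]? = some i then wtt p i (x.drop (k+1)) * cf p v (x.eraseIdx k) else 0

lemma perm_cons_eraseIdx {x : Word r} {k : ℕ} {i : Fin r} (h : x[k]? = some i) :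
    x.Perm (i :: x.eraseIdx k) := by
  obtain ⟨hk, hv⟩ := List.getElem?_eq_some_iff.mp h
  have hk' : k ≤ (x.eraseIdx k).length := by
    have := List.length_eraseIdx_add_one hk; omega
  have h1 : (x.eraseIdx k).insertIdx k i = x := by
    clear hk' h
    induction x generalizing k with
    | nil => simp at hk
    | cons a t ih =>
      cases k with
      | zero => simp_all
      | succ k =>
        simp only [List.length_cons, Nat.succ_lt_succ_iff] at hk
        simp only [List.getElem_cons_succ] at hv
        simp [List.eraseIdx_cons_succ, List.insertIdx_succ_cons, ih hk hv]
  have h2 := List.perm_insertIdx i (x.eraseIdx k) hk'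
  rwa [h1] at h2

lemma cf_ne_zero_perm (p : Fin r → Fin r → ℤ) :
    ∀ (v x : Word r), cf p v x ≠ 0 → x.Perm v := by
  intro v
  induction v with
  | nil => intro x h; by_cases hx : x = [] <;> simp_all [cf]
  | cons i v ih =>
    intro x h
    rw [cf] at h
    obtain ⟨k, hk, hne⟩ := Finset.exists_ne_zero_of_sum_ne_zero h
    by_cases hx : x[k]? = some i
    · rw [if_pos hx] at hne
      have h2 : cf p v (x.eraseIdx k) ≠ 0 := fun h0 => hne (by rw [h0, mul_zero])
      exact (perm_cons_eraseIdx hx).trans ((ih _ h2).cons i)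
    · simp [hx] at hne

lemma cf_cons_cons (p : Fin r → Fin r → ℤ) (i j : Fin r) (v x : Word r) :
    cf p (i::v) (j::x) = (∑ k ∈ Finset.range x.length,
      if x[k]? = some i then wtt p i (x.drop (k+1)) * cf p v (j :: x.eraseIdx k) else 0)
      + (if j = i then wtt p i x * cf p v x else 0) := by
  rw [cf]
  simp only [List.length_cons]
  rw [Finset.sum_range_succ']
  simp [List.getElem?_cons_succ, List.eraseIdx_cons_succ, Option.some_inj, eq_comm]

theorem cf_symm (p : Fin r → Fin r → ℤ) (v x : Word r) : cf p v x = cf p x v := by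
  suffices H : ∀ n (v x : Word r), v.length + x.length ≤ n → cf p v x = cf p x v from
    H _ v x le_rfl
  intro n
  induction n with
  | zero =>
    intro v x hl
    have hv : v = [] := List.length_eq_zero_iff.mp (by omega)
    have hx : x = [] := List.length_eq_zero_iff.mp (by omega)
    rw [hv, hx]
  | succ n IH =>
    intro v x hl
    match v, x with
    | [], [] => rfl
    | [], j :: x' => simp [cf]
    | i :: v', [] => simp [cf]
    | i :: v', j :: x' =>
      simp only [List.length_cons] at hl
      rw [cf_cons_cons, cf_cons_cons]
      congr 1
      · -- double sums
        have expandL : ∀ k ∈ Finset.range x'.length,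
            (if x'[k]? = some i then wtt p i (x'.drop (k+1)) * cf p v' (j :: x'.eraseIdx k) else 0)
            = ∑ l ∈ Finset.range v'.length,
              (if x'[k]? = some i then (if v'[l]? = some j then
                wtt p i (x'.drop (k+1)) * (wtt p j (v'.drop (l+1)) *
                  cf p (v'.eraseIdx l) (x'.eraseIdx k)) else 0) else 0) := by
          intro k hk
          rw [Finset.mem_range] at hk
          by_cases hx : x'[k]? = some i
          · rw [if_pos hx]
            have hlen : (x'.eraseIdx k).length + 1 = x'.length :=
              List.length_eraseIdx_add_one hk
            have h1 : cf p v' (j :: x'.eraseIdx k) = cf p (j :: x'.eraseIdx k) v' := by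
              apply IH; simp only [List.length_cons]; omega
            rw [h1, cf]
            rw [Finset.mul_sum]
            refine Finset.sum_congr rfl fun l hk2 => ?_
            rw [Finset.mem_range] at hk2
            simp only [if_pos hx, mul_ite, mul_zero]
            by_cases hv : v'[l]? = some j
            · rw [if_pos hv, if_pos hv]
              have h2 : cf p (x'.eraseIdx k) (v'.eraseIdx l)
                  = cf p (v'.eraseIdx l) (x'.eraseIdx k) := by
                apply IH
                have := List.length_eraseIdx_add_one hk2
                omega
              rw [h2]
            · rw [if_neg hv, if_neg hv]
          · simp [hx]
        have expandR : ∀ l ∈ Finset.range v'.length,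
            (if v'[l]? = some j then wtt p j (v'.drop (l+1)) * cf p x' (i :: v'.eraseIdx l) else 0)
            = ∑ k ∈ Finset.range x'.length,
              (if v'[l]? = some j then (if x'[k]? = some i then
                wtt p j (v'.drop (l+1)) * (wtt p i (x'.drop (k+1)) *
                  cf p (v'.eraseIdx l) (x'.eraseIdx k)) else 0) else 0) := by
          intro l hl2
          rw [Finset.mem_range] at hl2
          by_cases hv : v'[l]? = some j
          · rw [if_pos hv]
            have hlen : (v'.eraseIdx l).length + 1 = v'.length :=
              List.length_eraseIdx_add_one hl2
            have h1 : cf p x' (i :: v'.eraseIdx l) = cf p (i :: v'.eraseIdx l) x' := by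
              apply IH; simp only [List.length_cons]; omega
            rw [h1, cf]
            rw [Finset.mul_sum]
            refine Finset.sum_congr rfl fun k hk2 => ?_
            simp only [if_pos hv, mul_ite, mul_zero]
          · simp [hv]
        rw [Finset.sum_congr rfl expandL, Finset.sum_congr rfl expandR, Finset.sum_comm]
        refine Finset.sum_congr rfl fun k _ => Finset.sum_congr rfl fun l _ => ?_
        by_cases hx : x'[l]? = some i <;> by_cases hv : v'[k]? = some j <;>
          simp [hx, hv] <;> ring
      · -- boundary
        by_cases hij : j = i
        · subst hij
          simp only [if_pos rfl]
          have h1 : cf p v' x' = cf p x' v' := IH _ _ (by omega)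
          by_cases h0 : cf p v' x' = 0
          · rw [h0, ← h1, h0, mul_zero, mul_zero]
          · rw [wtt_perm p j (cf_ne_zero_perm p v' x' h0), h1]
        · rw [if_neg hij, if_neg (Ne.symm hij)]

def shW (p : Fin r → Fin r → ℤ) (w z : Word r) : FA r := shAux p w.reverse z.reverse

lemma shW_nil_left (z : Word r) : shW p [] z = Finsupp.single z 1 := by
  rw [shW, List.reverse_nil, shAux_nil_left, List.reverse_reverse]

lemma shW_nil_right (w : Word r) : shW p w [] = Finsupp.single w 1 := by
  rw [shW, List.reverse_nil, shAux_nil_right, List.reverse_reverse]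

lemma pairW_singleton (u : Word r) (b : Fin r) :
    pairW p u [b] = (u.map (fun c => p c b)).sum := by simp [pairW]

lemma pairW_perm {u u' : Word r} (h : u.Perm u') (b : Fin r) :
    pairW p u [b] = pairW p u' [b] := by
  rw [pairW_singleton, pairW_singleton, (h.map _).sum_eq]

lemma pairW_snoc (u : Word r) (c b : Fin r) :
    pairW p (u ++ [c]) [b] = pairW p u [b] + p c b := by
  simp [pairW_singleton]

lemma pairW_cons (c : Fin r) (u : Word r) (b : Fin r) :
    pairW p (c :: u) [b] = p c b + pairW p u [b] := by
  simp [pairW_singleton]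

lemma shW_snoc_snoc (a b : Fin r) (w z : Word r) :
    shW p (w ++ [a]) (z ++ [b]) =
      Finsupp.mapDomain (fun u => u ++ [a]) (shW p w (z ++ [b]))
      + (qq ^ (-(pairW p (w ++ [a]) [b]))) •
          Finsupp.mapDomain (fun u => u ++ [b]) (shW p (w ++ [a]) z) := by
  have hperm : (a :: w.reverse).Perm (w ++ [a]) := by
    refine ((w.reverse_perm).cons a).trans ?_
    have h2 := List.perm_insertIdx a w (le_refl w.length)
    rw [List.insertIdx_length_self] at h2
    exact h2.symm
  unfold shW
  simp only [List.reverse_append, List.reverse_cons, List.reverse_nil, List.nil_append,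
    List.singleton_append]
  rw [shAux_cons_cons, pairW_perm hperm b]

lemma lmul_single (i : Fin r) (y : Word r) (c : K) :
    lmul p i (Finsupp.single y c) = c • ∑ k ∈ Finset.range (y.length + 1),
      wtt p i (y.drop k) • Finsupp.single (y.insertIdx k i) (1 : K) := by
  rw [lmul_apply, shuffle_single_single, one_mul]
  have : ([i] : Word r).reverse = [i] := rfl
  rw [this, sh_single]

lemma wtt_single (i b : Fin r) : wtt p i [b] = qq ^ (-(p i b)) := by simp [wtt]

/-- Commutation of letter-multiplication with appending a letter. -/
lemma lmul_mapDomain (i a : Fin r) (h : FA r) :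
    lmul p i (Finsupp.mapDomain (fun u => u ++ [a]) h)
      = (qq ^ (-(p i a))) • Finsupp.mapDomain (fun u => u ++ [a]) (lmul p i h)
        + Finsupp.mapDomain (fun u => u ++ [i])
            (Finsupp.mapDomain (fun u => u ++ [a]) h) := by
  induction h using Finsupp.induction_linear with
  | zero => simp
  | add f g hf hg =>
    rw [Finsupp.mapDomain_add, map_add, hf, hg, Finsupp.mapDomain_add, map_add,
      Finsupp.mapDomain_add, smul_add]
    abel
  | single u c =>
    rw [Finsupp.mapDomain_single, lmul_single, lmul_single, Finsupp.mapDomain_single]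
    have hlen : (u ++ [a]).length = u.length + 1 := by simp
    rw [hlen]
    conv_lhs => rw [Finset.sum_range_succ]
    have hd : (u ++ [a]).drop (u.length + 1) = [] := List.drop_eq_nil_of_le (by simp)
    have hi : (u ++ [a]).insertIdx (u.length + 1) i = u ++ [a] ++ [i] := by
      conv_lhs => rw [show u.length + 1 = (u ++ [a]).length by simp]
      rw [List.insertIdx_length_self]
    rw [hd, hi, wtt_nil, one_smul, smul_add, Finsupp.smul_single, smul_eq_mul, mul_one]
    congr 1
    rw [Finsupp.mapDomain_smul, mapDomain_finset_sum]
    simp only [Finsupp.mapDomain_smul, Finsupp.mapDomain_single]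
    simp only [Finset.smul_sum, smul_smul]
    refine Finset.sum_congr rfl fun k hk => ?_
    rw [Finset.mem_range, Nat.lt_succ_iff] at hk
    rw [List.drop_append_of_le_length hk, insertIdx_append_left i u k hk [a], wtt_append,
      wtt_single]
    congr 1
    ring

lemma shW_single_left (i : Fin r) (z : Word r) :
    shW p [i] z = ∑ k ∈ Finset.range (z.length + 1),
      wtt p i (z.drop k) • Finsupp.single (z.insertIdx k i) (1 : K) := by
  rw [shW, List.reverse_singleton]
  exact sh_single i z

lemma star_letter : ∀ (w z : Word r) (i : Fin r),
    lmul p i (shW p w z) = ∑ k ∈ Finset.range (w.length + 1),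
      wtt p i (w.drop k) • shW p (w.insertIdx k i) z := by
  suffices H : ∀ (n : ℕ) (w z : Word r) (i : Fin r), w.length + z.length ≤ n →
      lmul p i (shW p w z) = ∑ k ∈ Finset.range (w.length + 1),
        wtt p i (w.drop k) • shW p (w.insertIdx k i) z from
    fun w z i => H _ w z i le_rfl
  intro n
  induction n with
  | zero =>
    intro w z i hl
    have hw : w = [] := List.length_eq_zero_iff.mp (by omega)
    have hz : z = [] := List.length_eq_zero_iff.mp (by omega)
    subst hw; subst hz
    rw [shW_nil_right, lmul_single, one_smul]
    refine Finset.sum_congr rfl fun k _ => ?_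
    rw [shW_nil_right]
  | succ n IH =>
    intro w z i hl
    rcases List.eq_nil_or_concat z with hz | ⟨z', b, hz⟩
    rotate_left
    rw [List.concat_eq_append] at hz
    rotate_right
    · subst hz
      rw [shW_nil_right, lmul_single, one_smul]
      refine Finset.sum_congr rfl fun k _ => ?_
      rw [shW_nil_right]
    subst hz
    rcases List.eq_nil_or_concat w with hw | ⟨w', a, hw⟩
    rotate_left
    rw [List.concat_eq_append] at hw
    rotate_right
    · subst hw
      rw [shW_nil_left, lmul_single, one_smul]
      simp only [List.length_nil, zero_add, Finset.sum_range_one, List.drop_zero, wtt_nil,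
        one_smul, List.insertIdx_zero]
      exact (shW_single_left i (z' ++ [b])).symm
    subst hw
    have hlw : (w' ++ [a]).length = w'.length + 1 := by simp
    have hlen' : w'.length + (z' ++ [b]).length ≤ n := by
      simp only [List.length_append, List.length_cons, List.length_nil] at hl ⊢; omega
    have hlen'' : (w' ++ [a]).length + z'.length ≤ n := by
      simp only [List.length_append, List.length_cons, List.length_nil] at hl ⊢; omega
    have hIH1 := IH w' (z' ++ [b]) i hlen'
    have hIH2 := IH (w' ++ [a]) z' i hlen''
    have hβγ : qq ^ (-(pairW p (w' ++ [a] ++ [i]) [b]))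
        = qq ^ (-(pairW p (w' ++ [a]) [b])) * qq ^ (-(p i b)) := by
      rw [pairW_snoc (w' ++ [a]) i b, neg_add, zpow_add₀ qq_ne_zero]
    have hδ : ∀ k, k ≤ w'.length → qq ^ (-(pairW p (w'.insertIdx k i ++ [a]) [b]))
        = qq ^ (-(pairW p (w' ++ [a]) [b])) * qq ^ (-(p i b)) := by
      intro k hk
      have h1 : (w'.insertIdx k i ++ [a]).Perm ((w' ++ [a]) ++ [i]) := by
        refine ((List.perm_insertIdx i w' hk).append_right [a]).trans ?_
        have h2 := List.perm_insertIdx i (w' ++ [a]) (le_refl _)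
        rw [List.insertIdx_length_self] at h2
        exact h2.symm
      rw [pairW_perm h1 b, pairW_snoc (w' ++ [a]) i b, neg_add, zpow_add₀ qq_ne_zero]
    have hinslast : (w' ++ [a]).insertIdx (w'.length + 1) i = w' ++ [a] ++ [i] := by
      conv_lhs => rw [show w'.length + 1 = (w' ++ [a]).length by simp]
      rw [List.insertIdx_length_self]
    have hdroplast : (w' ++ [a]).drop (w'.length + 1) = [] :=
      List.drop_eq_nil_of_le (by simp)
    -- the three building blocks
    have e1 : (qq ^ (-(p i a))) • Finsupp.mapDomain (fun u => u ++ [a])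
          (∑ k ∈ Finset.range (w'.length + 1),
            wtt p i (w'.drop k) • shW p (w'.insertIdx k i) (z' ++ [b]))
        = ∑ k ∈ Finset.range (w'.length + 1),
            (wtt p i (w'.drop k) * qq ^ (-(p i a))) •
              Finsupp.mapDomain (fun u => u ++ [a]) (shW p (w'.insertIdx k i) (z' ++ [b])) := by
      rw [mapDomain_finset_sum, Finset.smul_sum]
      refine Finset.sum_congr rfl fun k _ => ?_
      rw [Finsupp.mapDomain_smul, smul_smul]
      congr 1
      ring
    have e2 : (qq ^ (-(pairW p (w' ++ [a]) [b]))) • ((qq ^ (-(p i b))) •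
          Finsupp.mapDomain (fun u => u ++ [b])
          (∑ k ∈ Finset.range ((w' ++ [a]).length + 1),
            wtt p i ((w' ++ [a]).drop k) • shW p ((w' ++ [a]).insertIdx k i) z'))
        = (∑ k ∈ Finset.range (w'.length + 1),
            (wtt p i (w'.drop k) * qq ^ (-(p i a)) *
              (qq ^ (-(pairW p (w' ++ [a]) [b])) * qq ^ (-(p i b)))) •
              Finsupp.mapDomain (fun u => u ++ [b]) (shW p (w'.insertIdx k i ++ [a]) z'))
          + (qq ^ (-(pairW p (w' ++ [a]) [b])) * qq ^ (-(p i b))) •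
              Finsupp.mapDomain (fun u => u ++ [b]) (shW p (w' ++ [a] ++ [i]) z') := by
      rw [hlw, Finset.sum_range_succ, hdroplast, hinslast, wtt_nil, one_smul,
        Finsupp.mapDomain_add, mapDomain_finset_sum, smul_add, smul_add]
      congr 1
      · rw [Finset.smul_sum, Finset.smul_sum]
        refine Finset.sum_congr rfl fun k hk => ?_
        rw [Finset.mem_range, Nat.lt_succ_iff] at hk
        rw [Finsupp.mapDomain_smul, List.drop_append_of_le_length hk,
          insertIdx_append_left i w' k hk [a], wtt_append, wtt_single,
          smul_smul, smul_smul]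
        congr 1
        ring
      · rw [smul_smul]
    have e3 : Finsupp.mapDomain (fun u => u ++ [i]) (shW p (w' ++ [a]) (z' ++ [b]))
        = Finsupp.mapDomain (fun u => u ++ [i])
            (Finsupp.mapDomain (fun u => u ++ [a]) (shW p w' (z' ++ [b])))
          + (qq ^ (-(pairW p (w' ++ [a]) [b]))) • Finsupp.mapDomain (fun u => u ++ [i])
              (Finsupp.mapDomain (fun u => u ++ [b]) (shW p (w' ++ [a]) z')) := by
      rw [shW_snoc_snoc a b w' z', Finsupp.mapDomain_add, Finsupp.mapDomain_smul]
    have hR : (∑ k ∈ Finset.range ((w' ++ [a]).length + 1),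
          wtt p i ((w' ++ [a]).drop k) • shW p ((w' ++ [a]).insertIdx k i) (z' ++ [b]))
        = ((∑ k ∈ Finset.range (w'.length + 1),
            (wtt p i (w'.drop k) * qq ^ (-(p i a))) •
              Finsupp.mapDomain (fun u => u ++ [a]) (shW p (w'.insertIdx k i) (z' ++ [b])))
          + ∑ k ∈ Finset.range (w'.length + 1),
            (wtt p i (w'.drop k) * qq ^ (-(p i a)) *
              (qq ^ (-(pairW p (w' ++ [a]) [b])) * qq ^ (-(p i b)))) •
              Finsupp.mapDomain (fun u => u ++ [b]) (shW p (w'.insertIdx k i ++ [a]) z'))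
          + (Finsupp.mapDomain (fun u => u ++ [i]) (shW p (w' ++ [a]) (z' ++ [b]))
            + (qq ^ (-(pairW p (w' ++ [a]) [b])) * qq ^ (-(p i b))) •
                Finsupp.mapDomain (fun u => u ++ [b]) (shW p (w' ++ [a] ++ [i]) z')) := by
      rw [hlw, Finset.sum_range_succ, hdroplast, hinslast, wtt_nil, one_smul,
        shW_snoc_snoc i b (w' ++ [a]) z', hβγ, ← Finset.sum_add_distrib]
      congr 1
      refine Finset.sum_congr rfl fun k hk => ?_
      rw [Finset.mem_range, Nat.lt_succ_iff] at hk
      rw [List.drop_append_of_le_length hk, insertIdx_append_left i w' k hk [a],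
        shW_snoc_snoc a b (w'.insertIdx k i) z', hδ k hk, smul_add, wtt_append, wtt_single,
        smul_smul]
    rw [shW_snoc_snoc a b w' z', map_add, map_smul, lmul_mapDomain, lmul_mapDomain,
      hIH1, hIH2, e1, smul_add, e2, hR, e3]
    abel


end Lemmas

section Closure

variable {p : Fin r → Fin r → ℤ}

lemma shuffle_one_left (f : FA r) : shuffle p (Finsupp.single [] 1) f = f := by
  calc shuffle p (Finsupp.single [] 1) f = f.sum fun x d => Finsupp.single x d := by
        rw [shuffle, Finsupp.sum_single_index (by simp)]
        refine Finsupp.sum_congr fun x _ => ?_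
        rw [one_mul, List.reverse_nil, shAux_nil_left, List.reverse_reverse,
          Finsupp.smul_single, smul_eq_mul, mul_one]
  _ = f := Finsupp.sum_single f

lemma shuffle_one_right (f : FA r) : shuffle p f (Finsupp.single [] 1) = f := by
  rw [shuffle]
  refine Eq.trans (Finsupp.sum_congr fun w _ => ?_) (Finsupp.sum_single f)
  rw [Finsupp.sum_single_index (by simp), mul_one, List.reverse_nil, shAux_nil_right,
    List.reverse_reverse, Finsupp.smul_single, smul_eq_mul, mul_one]

lemma xiWord_cons (i : Fin r) (v : Word r) :
    xiWord p (i :: v) = shuffle p (Finsupp.single [i] 1) (xiWord p v) := rfl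

lemma InU_xiWord (v : Word r) : InU p (xiWord p v) := by
  induction v with
  | nil => exact InU.one
  | cons i v ih => exact InU.mul (InU.letter i) ih

lemma InU_zero : InU p (0 : FA r) := by
  have h := InU.smul (0 : K) (InU.one (p := p))
  rwa [zero_smul] at h

lemma InU_finset_sum {ι : Type} (s : Finset ι) (h : ι → FA r)
    (hs : ∀ i ∈ s, InU p (h i)) : InU p (∑ i ∈ s, h i) := by
  classical
  induction s using Finset.induction_on with
  | empty => simpa using InU_zero
  | insert _ _ hni ih =>
    rw [Finset.sum_insert hni]
    exact InU.add (hs _ (Finset.mem_insert_self _ _))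
      (ih fun i hi => hs i (Finset.mem_insert_of_mem hi))

lemma shuffle_finset_sum_left {ι : Type} (s : Finset ι) (h : ι → FA r) (g : FA r) :
    shuffle p (∑ k ∈ s, h k) g = ∑ k ∈ s, shuffle p (h k) g := by
  classical
  induction s using Finset.induction_on with
  | empty => simp [shuffle_zero_left]
  | insert _ _ hni ih => rw [Finset.sum_insert hni, Finset.sum_insert hni, shuffle_add_left, ih]

lemma lmul_shuffle (i : Fin r) (f g : FA r) :
    shuffle p (lmul p i f) g = lmul p i (shuffle p f g) := by
  induction f using Finsupp.induction_linear with
  | zero => rw [map_zero, shuffle_zero_left, map_zero]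
  | add f₁ f₂ h₁ h₂ => rw [map_add, shuffle_add_left, h₁, h₂, shuffle_add_left, map_add]
  | single w c =>
    induction g using Finsupp.induction_linear with
    | zero => rw [shuffle_zero_right, shuffle_zero_right, map_zero]
    | add g₁ g₂ h₁ h₂ => rw [shuffle_add_right, shuffle_add_right, h₁, h₂, map_add]
    | single z d =>
      rw [lmul_single, shuffle_smul_left, shuffle_finset_sum_left]
      conv_rhs => rw [shuffle_single_single]
      rw [map_smul,
        show shAux p w.reverse z.reverse = shW p w z from rfl, star_letter w z i,
        Finset.smul_sum, Finset.smul_sum]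
      refine Finset.sum_congr rfl fun k _ => ?_
      rw [shuffle_smul_left, shuffle_single_single, one_mul,
        show shAux p (w.insertIdx k i).reverse z.reverse = shW p (w.insertIdx k i) z from rfl,
        smul_smul, smul_smul, smul_smul]
      congr 1
      ring

lemma shuffle_xi_mem (v : Word r) {g : FA r}
    (hg : g ∈ Submodule.span K (Set.range (xiWord p))) :
    shuffle p (xiWord p v) g ∈ Submodule.span K (Set.range (xiWord p)) := by
  induction v generalizing g with
  | nil =>
    rw [show xiWord p ([] : Word r) = Finsupp.single ([] : Word r) 1 from rfl,
      shuffle_one_left]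
    exact hg
  | cons i v ih =>
    have key : shuffle p (xiWord p (i :: v)) g
        = lmul p i (shuffle p (xiWord p v) g) := by
      rw [xiWord_cons, ← lmul_apply, lmul_shuffle]
    rw [key]
    -- lmul preserves the span
    refine Submodule.span_induction ?_ ?_ ?_ ?_ (ih hg)
    · rintro x ⟨y, rfl⟩
      exact Submodule.subset_span ⟨i :: y, rfl⟩
    · rw [map_zero]; exact Submodule.zero_mem _
    · intro a b _ _ ha hb; rw [map_add]; exact Submodule.add_mem _ ha hb
    · intro c a _ ha; rw [map_smul]; exact Submodule.smul_mem _ c ha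

lemma InU_mem_span {f : FA r} (hf : InU p f) :
    f ∈ Submodule.span K (Set.range (xiWord p)) := by
  induction hf with
  | letter i =>
    have : Finsupp.single [i] (1 : K) = xiWord p [i] := by
      rw [show xiWord p [i] = shuffle p (Finsupp.single [i] 1) (xiWord p []) from rfl,
        show xiWord p ([] : Word r) = Finsupp.single ([] : Word r) 1 from rfl,
        shuffle_one_right]
    rw [this]; exact Submodule.subset_span ⟨[i], rfl⟩
  | one => exact Submodule.subset_span ⟨[], rfl⟩
  | add _ _ ha hb => exact Submodule.add_mem _ ha hb
  | smul c _ ha => exact Submodule.smul_mem _ c ha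
  | mul hf hg ihf ihg =>
    refine Submodule.span_induction ?_ ?_ ?_ ?_ ihf
    · rintro x ⟨v, rfl⟩; exact shuffle_xi_mem v ihg
    · rw [shuffle_zero_left]; exact Submodule.zero_mem _
    · intro a b _ _ ha hb; rw [shuffle_add_left]; exact Submodule.add_mem _ ha hb
    · intro c a _ ha; rw [shuffle_smul_left]; exact Submodule.smul_mem _ c ha

lemma xiWord_apply_cf (v x : Word r) : xiWord p v x = cf p v x := by
  induction v generalizing x with
  | nil =>
    rw [show xiWord p ([] : Word r) = Finsupp.single ([] : Word r) 1 from rfl,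
      Finsupp.single_apply, cf]
    simp [eq_comm]
  | cons i v ih =>
    rw [xiWord_cons, lmul_apply_coeff, cf]
    refine Finset.sum_congr rfl fun k _ => ?_
    rw [ih]

lemma xiWord_symm (v x : Word r) : xiWord p v x = xiWord p x v := by
  rw [xiWord_apply_cf, xiWord_apply_cf, cf_symm]

lemma xiWord_ne_zero_deg {v x : Word r} (h : xiWord p v x ≠ 0) : deg x = deg v := by
  rw [xiWord_apply_cf] at h
  have hperm := cf_ne_zero_perm p v x h
  funext i
  exact hperm.count_eq i

lemma wlt_trichotomy (a b : Word r) : wlt a b ∨ a = b ∨ wlt b a :=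
  lt_trichotomy a b

lemma wlt_asymm {a b : Word r} (h1 : wlt a b) (h2 : wlt b a) : False :=
  lt_asymm (show a < b from h1) h2

lemma sum_count_eq_length (y : Word r) : ∑ i : Fin r, y.count i = y.length := by
  induction y with
  | nil => simp
  | cons a t ih =>
    calc ∑ i : Fin r, (a :: t).count i = ∑ i : Fin r, (t.count i + if a = i then 1 else 0) := by
          refine Finset.sum_congr rfl fun i _ => ?_
          simp [List.count_cons]
    _ = t.length + 1 := by
          rw [Finset.sum_add_distrib, ih, Finset.sum_ite_eq Finset.univ a (fun _ => 1),
            if_pos (Finset.mem_univ a)]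
    _ = (a :: t).length := by simp

lemma finite_deg (ν : Fin r → ℕ) : {y : Word r | deg y = ν}.Finite := by
  have hL : ∀ L : ℕ, {y : Word r | y.length = L}.Finite := by
    intro L
    induction L with
    | zero =>
      refine Set.Finite.subset (Set.finite_singleton []) fun y hy => ?_
      simp only [Set.mem_setOf_eq] at hy
      simp [List.length_eq_zero_iff.mp hy]
    | succ L ih =>
      refine Set.Finite.subset
        (Set.Finite.image2 (fun (a : Fin r) (t : Word r) => a :: t) Set.finite_univ ih)
        fun y hy => ?_
      simp only [Set.mem_setOf_eq] at hy
      match y with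
      | [] => simp at hy
      | a :: t =>
        exact Set.mem_image2_of_mem (Set.mem_univ a) (by simpa using hy)
  refine Set.Finite.subset (hL (∑ i : Fin r, ν i)) fun y hy => ?_
  simp only [Set.mem_setOf_eq] at hy ⊢
  rw [← sum_count_eq_length]
  exact Finset.sum_congr rfl fun i _ => congrFun hy i

end Closure


set_option maxHeartbeats 4000000 in
set_option synthInstance.maxHeartbeats 400000 in
/-- Lemma 4.3: a word `w` is good if and only if `Ξ(w)` is not a linear combination of
the `Ξ(v)` for words `v` of the same degree with `v > w`. -/
theorem good_iff_xi_not_in_span_of_greater {r : ℕ} (hr : 1 ≤ r) (C : CartanData r)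
    (w : Word r) :
    IsGood C.p w ↔
      xiWord C.p w ∉ Submodule.span K
        {f : FA r | ∃ v : Word r, deg v = deg w ∧ wlt w v ∧ f = xiWord C.p v} := by
  classical
  constructor
  · rintro ⟨u, hU, ⟨ν', hhom⟩, hw0, hle⟩ hmem
    have husp : u ∈ Submodule.span K (Set.range (xiWord C.p)) := InU_mem_span hU
    rw [Submodule.mem_span_set] at husp
    obtain ⟨c, hsupp, hsum⟩ := husp
    let vs : FA r → Word r := fun g => if h : ∃ v, xiWord C.p v = g then h.choose else []
    have hvs : ∀ g ∈ c.support, xiWord C.p (vs g) = g := by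
      intro g hg
      obtain ⟨v, hv⟩ := hsupp hg
      have hex : ∃ v, xiWord C.p v = g := ⟨v, hv⟩
      simp only [vs, dif_pos hex]
      exact hex.choose_spec
    set Φ : FA r →ₗ[K] K := ∑ g ∈ c.support, c g • Finsupp.lapply (vs g) with hΦdef
    have hΦ : ∀ y : Word r, Φ (xiWord C.p y) = u y := by
      intro y
      have h1 : Φ (xiWord C.p y) = ∑ g ∈ c.support, c g * (xiWord C.p y) (vs g) := by
        rw [hΦdef, LinearMap.sum_apply]
        refine Finset.sum_congr rfl fun g _ => ?_
        rw [LinearMap.smul_apply, Finsupp.lapply_apply, smul_eq_mul]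
      rw [h1, ← hsum, Finsupp.sum_apply, Finsupp.sum]
      refine Finset.sum_congr rfl fun g hg => ?_
      rw [Finsupp.smul_apply, smul_eq_mul]
      congr 1
      rw [xiWord_symm, hvs g hg]
    have hker : {f : FA r | ∃ v : Word r, deg v = deg w ∧ wlt w v ∧ f = xiWord C.p v}
        ⊆ (LinearMap.ker Φ : Set (FA r)) := by
      rintro f ⟨v, hdv, hwv, rfl⟩
      simp only [SetLike.mem_coe, LinearMap.mem_ker]
      rw [hΦ v]
      by_contra h0
      have hv_supp : v ∈ u.support := Finsupp.mem_support_iff.mpr h0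
      rcases hle v hv_supp with h | h
      · exact wlt_asymm hwv h
      · rw [h] at hwv
        exact wlt_asymm hwv hwv
    have hΦw : Φ (xiWord C.p w) = 0 := Submodule.span_le.mpr hker hmem
    rw [hΦ w] at hΦw
    exact hw0 hΦw
  · intro hnot
    have hfin : {y : Word r | deg y = deg w}.Finite := finite_deg (deg w)
    set N : Finset (Word r) := hfin.toFinset with hN
    have hmemN : ∀ y : Word r, y ∈ N ↔ deg y = deg w := by
      intro y; rw [hN, Set.Finite.mem_toFinset]; rfl
    have hwN : w ∈ N := (hmemN w).mpr rfl
    let ρ : Word r → ({y // y ∈ N} → K) := fun x y => xiWord C.p x y.1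
    set R : Submodule K ({y // y ∈ N} → K) :=
      Submodule.span K (ρ '' {v | v ∈ N ∧ wlt w v}) with hRdef
    have hρw : ρ w ∉ R := by
      intro hmem
      apply hnot
      rw [hRdef, Submodule.mem_span_set] at hmem
      obtain ⟨c, hsupp, hsum⟩ := hmem
      let vm : ({y // y ∈ N} → K) → Word r :=
        fun m => if h : ∃ v, (v ∈ N ∧ wlt w v) ∧ ρ v = m then h.choose else []
      have hvm : ∀ m ∈ c.support, (vm m ∈ N ∧ wlt w (vm m)) ∧ ρ (vm m) = m := by
        intro m hm
        obtain ⟨v, hv1, hv2⟩ := hsupp hm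
        have hex : ∃ v, (v ∈ N ∧ wlt w v) ∧ ρ v = m := ⟨v, hv1, hv2⟩
        simp only [vm, dif_pos hex]
        exact hex.choose_spec
      have hxiw : xiWord C.p w = ∑ m ∈ c.support, c m • xiWord C.p (vm m) := by
        ext y
        by_cases hy : deg y = deg w
        · have hyN : y ∈ N := (hmemN y).mpr hy
          have hval := congrFun hsum ⟨y, hyN⟩
          rw [Finsupp.sum, Finset.sum_apply] at hval
          rw [Finset.sum_apply']
          calc xiWord C.p w y = ρ w ⟨y, hyN⟩ := rfl
          _ = ∑ m ∈ c.support, (c m • m) ⟨y, hyN⟩ := hval.symm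
          _ = ∑ m ∈ c.support, (c m • xiWord C.p (vm m)) y := by
                refine Finset.sum_congr rfl fun m hm => ?_
                rw [Pi.smul_apply, Finsupp.smul_apply, smul_eq_mul, smul_eq_mul]
                congr 1
                exact (congrFun (hvm m hm).2 ⟨y, hyN⟩).symm
        · have h1 : xiWord C.p w y = 0 := by
            by_contra h0
            exact hy (xiWord_ne_zero_deg h0)
          rw [h1, Finset.sum_apply']
          symm
          refine Finset.sum_eq_zero fun m hm => ?_
          rw [Finsupp.smul_apply]
          have h2 : xiWord C.p (vm m) y = 0 := by
            by_contra h0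
            have h3 := xiWord_ne_zero_deg h0
            rw [(hmemN (vm m)).mp (hvm m hm).1.1] at h3
            exact hy h3
          rw [h2, smul_zero]
      rw [hxiw]
      refine Submodule.sum_mem _ fun m hm => ?_
      refine Submodule.smul_mem _ _ (Submodule.subset_span ?_)
      exact ⟨vm m, (hmemN (vm m)).mp (hvm m hm).1.1, (hvm m hm).1.2, rfl⟩
    have hq : (Submodule.Quotient.mk (ρ w) : ({y // y ∈ N} → K) ⧸ R) ≠ 0 :=
      fun h => hρw ((Submodule.Quotient.mk_eq_zero R).mp h)
    have hψ : ∃ ψ : Module.Dual K (({y // y ∈ N} → K) ⧸ R),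
        ψ (Submodule.Quotient.mk (ρ w)) ≠ 0 := by
      by_contra hc
      push_neg at hc
      exact hq ((Module.forall_dual_apply_eq_zero_iff K _).mp hc)
    obtain ⟨ψ, hψ0⟩ := hψ
    set φ : ({y // y ∈ N} → K) →ₗ[K] K := ψ.comp R.mkQ with hφdef
    have hφR : ∀ x ∈ R, φ x = 0 := by
      intro x hx
      have h1 : R.mkQ x = 0 := by
        rw [Submodule.mkQ_apply]
        exact (Submodule.Quotient.mk_eq_zero R).mpr hx
      rw [hφdef, LinearMap.comp_apply, h1, map_zero]
    have hφw : φ (ρ w) ≠ 0 := by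
      rw [hφdef, LinearMap.comp_apply, Submodule.mkQ_apply]
      exact hψ0
    set t : {y // y ∈ N} → K := fun y => φ (Pi.single y 1) with htdef
    have hrep : ∀ v : {y // y ∈ N} → K, φ v = ∑ y : {y // y ∈ N}, v y * t y := by
      intro v
      conv_lhs => rw [← Finset.univ_sum_single v]
      rw [map_sum]
      refine Finset.sum_congr rfl fun y _ => ?_
      have h1 : Pi.single y (v y) = v y • (Pi.single y (1 : K) : {y // y ∈ N} → K) := by
        funext z
        by_cases hz : z = y
        · subst hz; simp
        · simp [Pi.single_eq_of_ne hz]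
      rw [h1, map_smul, smul_eq_mul]
    set u : FA r := ∑ y : {y // y ∈ N}, t y • xiWord C.p y.1 with hudef
    have hu_apply : ∀ x : Word r, u x = φ (ρ x) := by
      intro x
      rw [hrep (ρ x), hudef, Finset.sum_apply']
      refine Finset.sum_congr rfl fun y _ => ?_
      rw [Finsupp.smul_apply, smul_eq_mul, xiWord_symm]
      exact mul_comm _ _
    have hhomu : Homog u (deg w) := by
      intro x hx
      rw [Finsupp.mem_support_iff] at hx
      have hex : ∃ y : {y // y ∈ N}, (t y • xiWord C.p y.1) x ≠ 0 := by
        by_contra hc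
        push_neg at hc
        apply hx
        rw [hudef, Finset.sum_apply']
        exact Finset.sum_eq_zero fun y _ => hc y
      obtain ⟨y, hy⟩ := hex
      have h2 : xiWord C.p y.1 x ≠ 0 := by
        intro h0
        apply hy
        rw [Finsupp.smul_apply, h0, smul_zero]
      rw [xiWord_ne_zero_deg h2]
      exact (hmemN y.1).mp y.2
    refine ⟨u, ?_, ⟨deg w, hhomu⟩, ?_, ?_⟩
    · rw [hudef]
      exact InU_finset_sum _ _ fun y _ => InU.smul _ (InU_xiWord _)
    · rw [hu_apply w]
      exact hφw
    · intro x hx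
      rcases wlt_trichotomy x w with h | h | h
      · exact Or.inl h
      · exact Or.inr h
      · exfalso
        have hxN : x ∈ N := (hmemN x).mpr (hhomu x hx)
        have h0 : u x = 0 := by
          rw [hu_apply x]
          exact hφR _ (Submodule.subset_span ⟨x, ⟨hxN, h⟩, rfl⟩)
        rw [Finsupp.mem_support_iff] at hx
        exact hx h0
end
end
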